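/- arXiv:1304.4778 — 5 statements merged into one kernel-verified Lean document; each statement's English description precedes it below -/
import Mathlib

section
/- Let a, b ∈ (0,1) satisfy √a ≤ 1 − √(1−b). Then there exists a constant c₁ > 0 such that for every z ∈ [0,1] and every integer n ≥ 1, E[Z_n(1−Z_n)] ≤ n^{c₁} · ( 2^{−n} + Pr(Z_n ∈ [a,b]) ), where (Z_n) is the BEC Bhattacharyya process started at z (equivalently, (1/n)·log₂ E[Z_n(1−Z_n)] − c₁·(log₂ n)/n ≤ (1/n)·log₂( 2^{−n} + Pr(Z_n ∈ [a,b]) )). Moreover, for every continuous f : [0,1] → [0,1] with f(z) > 0 for all z ∈ (0,1) and every a, b ∈ (0,1) with a ≤ b, there exists a constant c₃ > 0 (depending on a, b and f) such that for all n ≥ 0 and all z ∈ [0,1], Pr(Z_n ∈ [a,b]) ≤ 2^{c₃} · E[f(Z_n)]. -/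
open MeasureTheory Filter Topology

/-- The BEC polar maps: `t₁(x) = x²`, `t₀(x) = 2x - x²`. -/
noncomputable def becT (b : Bool) (x : ℝ) : ℝ := if b then x ^ 2 else 2 * x - x ^ 2

/-- The BEC Bhattacharyya process started at `z`. -/
noncomputable def becZ (z : ℝ) : ℕ → (ℕ → Bool) → ℝ
  | 0, _ => z
  | n + 1, ω => becT (ω n) (becZ z n ω)

/-- `μ` is the i.i.d. Bernoulli(1/2) product measure on `{0,1}^ℕ`,
characterized by its values on cylinder sets. -/
def IsBernoulliHalf (μ : Measure (ℕ → Bool)) : Prop :=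
  ∀ (n : ℕ) (b : Fin n → Bool), μ {ω | ∀ i : Fin n, ω i = b i} = (2 : ENNReal)⁻¹ ^ n

/-! ### Finite-path machinery -/

/-- Finite-path version of the process (first bit applied first). -/
noncomputable def finZ : (n : ℕ) → ℝ → (Fin n → Bool) → ℝ
  | 0, z, _ => z
  | n + 1, z, v => finZ n (becT (v 0) z) (Fin.tail v)

lemma finZ_succ (n : ℕ) (z : ℝ) (v : Fin (n+1) → Bool) :
    finZ (n+1) z v = finZ n (becT (v 0) z) (Fin.tail v) := rfl

/-- Sum of `g ∘ (final state)` over all `2^n` paths of length `n`, recursively. -/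
noncomputable def becSum (g : ℝ → ℝ) : ℕ → ℝ → ℝ
  | 0, z => g z
  | n + 1, z => becSum g n (becT false z) + becSum g n (becT true z)

lemma becSum_succ (g : ℝ → ℝ) (n : ℕ) (z : ℝ) :
    becSum g (n+1) z = becSum g n (becT false z) + becSum g n (becT true z) := rfl

lemma becZ_shift (z : ℝ) (n : ℕ) (ω : ℕ → Bool) :
    becZ z (n + 1) ω = becZ (becT (ω 0) z) n (fun k => ω (k + 1)) := by
  induction n with
  | zero => rfl
  | succ n ih => rw [show becZ z (n+1+1) ω = becT (ω (n+1)) (becZ z (n+1) ω) from rfl, ih]; rfl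

lemma becZ_eq_finZ (n : ℕ) (z : ℝ) (ω : ℕ → Bool) :
    becZ z n ω = finZ n z (fun i : Fin n => ω i) := by
  induction n generalizing z ω with
  | zero => rfl
  | succ n ih =>
      rw [becZ_shift, ih, finZ_succ]
      have h0 : (ω (((0:Fin (n+1)):ℕ))) = ω 0 := by norm_num
      rw [h0]
      have ht : (fun i : Fin n => ω (↑i + 1)) = Fin.tail (fun i : Fin (n+1) => ω ↑i) := by
        funext i; simp [Fin.tail, Fin.val_succ]
      rw [ht]

lemma finZ_cons (n : ℕ) (z : ℝ) (b : Bool) (w : Fin n → Bool) :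
    finZ (n + 1) z (Fin.cons b w) = finZ n (becT b z) w := by
  rw [finZ_succ, Fin.cons_zero, Fin.tail_cons]

lemma sum_finZ (g : ℝ → ℝ) (n : ℕ) (z : ℝ) :
    ∑ v : Fin n → Bool, g (finZ n z v) = becSum g n z := by
  induction n generalizing z with
  | zero => simp [becSum, finZ]
  | succ n ih =>
      rw [← Equiv.sum_comp (Fin.consEquiv (fun _ => Bool)) (fun v => g (finZ (n+1) z v))]
      rw [Fintype.sum_prod_type]
      have key : ∀ (b : Bool) (w : Fin n → Bool),
          g (finZ (n+1) z ((Fin.consEquiv (fun _ => Bool)) (b, w))) = g (finZ n (becT b z) w) := by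
        intro b w
        have h : (Fin.consEquiv (fun _ => Bool)) (b, w) = Fin.cons b w := rfl
        rw [h, finZ_cons]
      simp only [key]
      rw [Fintype.sum_bool, ih, ih, becSum_succ]
      ring

/-! ### The measure-theoretic bridge -/

section Bridge
variable (μ : Measure (ℕ → Bool)) [IsProbabilityMeasure μ]

lemma bridge_integral (hμ : IsBernoulliHalf μ) (g : ℝ → ℝ) (n : ℕ) (z : ℝ) :
    ∫ ω, g (becZ z n ω) ∂μ = ((1:ℝ)/2) ^ n * becSum g n z := by
  classical
  set R : (ℕ → Bool) → (Fin n → Bool) := fun ω i => ω i with hR_def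
  have hR : Measurable R := measurable_pi_lambda _ (fun i => measurable_pi_apply _)
  set ν : Measure (Fin n → Bool) := Measure.map R μ with hν_def
  have hsingle : ∀ v : Fin n → Bool, ν {v} = (2 : ENNReal)⁻¹ ^ n := by
    intro v
    rw [hν_def, Measure.map_apply hR (measurableSet_singleton v)]
    have hpre : R ⁻¹' {v} = {ω | ∀ i : Fin n, ω i = v i} := by
      ext ω
      simp [hR_def, Set.mem_preimage, Set.mem_singleton_iff, funext_iff]
    rw [hpre]; exact hμ n v
  have hcomp : ∀ ω, g (becZ z n ω) = (fun v => g (finZ n z v)) (R ω) := by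
    intro ω; rw [becZ_eq_finZ]
  calc ∫ ω, g (becZ z n ω) ∂μ
      = ∫ ω, (fun v => g (finZ n z v)) (R ω) ∂μ := by
        congr 1; funext ω; exact hcomp ω
    _ = ∫ v, g (finZ n z v) ∂ν := by
        rw [hν_def]
        exact (integral_map (f := fun v => g (finZ n z v)) hR.aemeasurable
          (Measurable.of_discrete.aestronglyMeasurable)).symm
    _ = ∑ v : Fin n → Bool, (ν {v}).toReal • g (finZ n z v) := by
        have : IsProbabilityMeasure ν := Measure.isProbabilityMeasure_map hR.aemeasurable
        exact integral_fintype .of_finite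
    _ = ((1:ℝ)/2) ^ n * becSum g n z := by
        rw [← sum_finZ g n z, Finset.mul_sum]
        refine Finset.sum_congr rfl (fun v _ => ?_)
        rw [hsingle v]
        simp [ENNReal.toReal_pow, smul_eq_mul]

lemma bridge_measure (hμ : IsBernoulliHalf μ) (s : Set ℝ) (n : ℕ) (z : ℝ) :
    (μ {ω | becZ z n ω ∈ s}).toReal
      = ((1:ℝ)/2) ^ n * becSum (s.indicator (fun _ => (1:ℝ))) n z := by
  classical
  set R : (ℕ → Bool) → (Fin n → Bool) := fun ω i => ω i with hR_def
  have hR : Measurable R := measurable_pi_lambda _ (fun i => measurable_pi_apply _)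
  have hA : {ω | becZ z n ω ∈ s} = R ⁻¹' {v | finZ n z v ∈ s} := by
    ext ω; simp [Set.mem_preimage, becZ_eq_finZ, hR_def]
  have hAm : MeasurableSet {ω | becZ z n ω ∈ s} := by
    rw [hA]; exact hR (MeasurableSet.of_discrete)
  have h := integral_indicator_const (1:ℝ) hAm (μ := μ)
  rw [smul_eq_mul, mul_one, Measure.real_def] at h
  rw [← h, ← bridge_integral μ hμ (s.indicator (fun _ => (1:ℝ))) n z]
  congr 1

end Bridge

/-! ### Elementary lemmas about the maps and path sums -/

lemma becT_false (x : ℝ) : becT false x = 2*x - x^2 := rfl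
lemma becT_true (x : ℝ) : becT true x = x^2 := rfl

open Set

lemma becT_mem01 {x : ℝ} (hx : x ∈ Icc (0:ℝ) 1) (c : Bool) : becT c x ∈ Icc (0:ℝ) 1 := by
  obtain ⟨h0, h1⟩ := hx
  cases c
  · rw [becT_false]; constructor <;> nlinarith
  · rw [becT_true]; constructor <;> nlinarith

lemma becSum_nonneg {g : ℝ → ℝ} (hg : ∀ x ∈ Icc (0:ℝ) 1, 0 ≤ g x) :
    ∀ n, ∀ z ∈ Icc (0:ℝ) 1, 0 ≤ becSum g n z := by
  intro n
  induction n with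
  | zero => intro z hz; exact hg z hz
  | succ n ih =>
      intro z hz
      rw [becSum_succ]
      have h0 := ih _ (becT_mem01 hz false)
      have h1 := ih _ (becT_mem01 hz true)
      linarith

lemma becSum_mono {g h : ℝ → ℝ} (hgh : ∀ x ∈ Icc (0:ℝ) 1, g x ≤ h x) :
    ∀ n, ∀ z ∈ Icc (0:ℝ) 1, becSum g n z ≤ becSum h n z := by
  intro n
  induction n with
  | zero => intro z hz; exact hgh z hz
  | succ n ih =>
      intro z hz
      rw [becSum_succ, becSum_succ]
      have h0 := ih _ (becT_mem01 hz false)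
      have h1 := ih _ (becT_mem01 hz true)
      linarith

lemma becSum_id (n : ℕ) (z : ℝ) : becSum (fun x => x) n z = 2^n * z := by
  induction n generalizing z with
  | zero => simp [becSum]
  | succ n ih =>
      rw [becSum_succ, ih, ih, becT_false, becT_true]
      ring

lemma becSum_one_sub (n : ℕ) (z : ℝ) : becSum (fun x => 1 - x) n z = 2^n * (1 - z) := by
  induction n generalizing z with
  | zero => simp [becSum]
  | succ n ih =>
      rw [becSum_succ, ih, ih, becT_false, becT_true]
      ring

lemma becSum_smul (c : ℝ) (g : ℝ → ℝ) (n : ℕ) (z : ℝ) :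
    becSum (fun x => c * g x) n z = c * becSum g n z := by
  induction n generalizing z with
  | zero => simp [becSum]
  | succ n ih => rw [becSum_succ, ih, ih, becSum_succ]; ring

lemma iter_t0 (k : ℕ) (z : ℝ) : (becT false)^[k] z = 1 - (1-z)^(2^k) := by
  induction k generalizing z with
  | zero => simp
  | succ k ih =>
      rw [Function.iterate_succ_apply, ih, becT_false]
      have h : ((1 - (2*z - z^2)))  = (1-z)^2 := by ring
      rw [h, ← pow_mul]
      ring_nf

lemma iter_t1 (k : ℕ) (z : ℝ) : (becT true)^[k] z = z^(2^k) := by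
  induction k generalizing z with
  | zero => simp
  | succ k ih =>
      rw [Function.iterate_succ_apply, ih, becT_true, ← pow_mul]
      ring_nf

lemma iter01 {z : ℝ} (hz : z ∈ Icc (0:ℝ) 1) (c : Bool) (k : ℕ) :
    (becT c)^[k] z ∈ Icc (0:ℝ) 1 := by
  induction k with
  | zero => simpa using hz
  | succ k ih => rw [Function.iterate_succ_apply']; exact becT_mem01 ih c

/-! ### The combinatorial heart -/

section Main
variable {a b : ℝ} (ha : a ∈ Ioo (0:ℝ) 1) (hb : b ∈ Ioo (0:ℝ) 1)
  (hab : Real.sqrt a ≤ 1 - Real.sqrt (1 - b))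

/-- Indicator of the middle interval. -/
noncomputable def chiM (a b : ℝ) : ℝ → ℝ := (Icc a b).indicator (fun _ => (1:ℝ))

lemma chiM_nonneg (x : ℝ) : 0 ≤ chiM a b x := by
  unfold chiM; exact Set.indicator_nonneg (fun _ _ => zero_le_one) x

include ha hb hab

lemma key_ineqs : 2*a - a^2 ≤ b ∧ a ≤ b^2 ∧ a ≤ b := by
  have hs0 : (0:ℝ) ≤ Real.sqrt a := Real.sqrt_nonneg a
  have hu0 : (0:ℝ) ≤ Real.sqrt (1-b) := Real.sqrt_nonneg _
  have hs2 : Real.sqrt a ^ 2 = a := Real.sq_sqrt ha.1.le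
  have hu2 : Real.sqrt (1-b) ^ 2 = 1 - b := Real.sq_sqrt (by linarith [hb.2] : (0:ℝ) ≤ 1 - b)
  have hs1 : Real.sqrt a ≤ 1 := by nlinarith [ha.2.le]
  have hkey : 2 * Real.sqrt a - a ≤ b := by nlinarith
  have h1 : a ≤ Real.sqrt a := by nlinarith
  have hsb : Real.sqrt a ≤ b := by nlinarith
  refine ⟨?_, ?_, ?_⟩
  · nlinarith [mul_nonneg (mul_nonneg hs0 (sq_nonneg (Real.sqrt a - 1)))
      (by linarith : (0:ℝ) ≤ Real.sqrt a + 2)]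
  · nlinarith [hb.1.le]
  · nlinarith

lemma sustain {y : ℝ} (hy : y ∈ Icc a b) :
    becT false y ∈ Icc a b ∨ becT true y ∈ Icc a b := by
  have hs0 : (0:ℝ) ≤ Real.sqrt a := Real.sqrt_nonneg a
  have hu0 : (0:ℝ) ≤ Real.sqrt (1-b) := Real.sqrt_nonneg _
  have hs2 : Real.sqrt a ^ 2 = a := Real.sq_sqrt ha.1.le
  have hu2 : Real.sqrt (1-b) ^ 2 = 1 - b := Real.sq_sqrt (by linarith [hb.2] : (0:ℝ) ≤ 1 - b)
  obtain ⟨hya, hyb⟩ := hy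
  have hy1 : y ≤ 1 := le_trans hyb hb.2.le
  have hy0 : 0 ≤ y := le_trans ha.1.le hya
  by_cases hc : y ≤ 1 - Real.sqrt (1 - b)
  · left
    rw [becT_false]
    constructor
    · nlinarith [ha.2.le]
    · nlinarith
  · right
    push_neg at hc
    rw [becT_true]
    constructor
    · nlinarith
    · nlinarith

lemma chiM_pos : ∀ n, ∀ y ∈ Icc a b, 1 ≤ becSum (chiM a b) n y := by
  have hsub : Icc a b ⊆ Icc (0:ℝ) 1 := Icc_subset_Icc ha.1.le hb.2.le
  intro n
  induction n with
  | zero =>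
      intro y hy
      show 1 ≤ chiM a b y
      unfold chiM
      rw [Set.indicator_of_mem hy]
  | succ n ih =>
      intro y hy
      rw [becSum_succ]
      rcases sustain ha hb hab hy with h | h
      · have h1 := ih _ h
        have hnn := becSum_nonneg (g := chiM a b) (fun x _ => chiM_nonneg x) n _
          (becT_mem01 (hsub hy) true)
        linarith
      · have h1 := ih _ h
        have hnn := becSum_nonneg (g := chiM a b) (fun x _ => chiM_nonneg x) n _
          (becT_mem01 (hsub hy) false)
        linarith

lemma reach (c : Bool) : ∀ k n : ℕ, k ≤ n → ∀ z ∈ Icc (0:ℝ) 1,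
    (becT c)^[k] z ∈ Icc a b → 1 ≤ becSum (chiM a b) n z := by
  intro k
  induction k with
  | zero =>
      intro n _ z _ hmem
      exact chiM_pos ha hb hab n z hmem
  | succ k ih =>
      intro n hkn z hz hmem
      obtain ⟨n', rfl⟩ : ∃ n', n = n' + 1 := ⟨n - 1, by omega⟩
      rw [becSum_succ]
      rw [Function.iterate_succ_apply] at hmem
      have h1 := ih n' (by omega) (becT c z) (becT_mem01 hz c) hmem
      cases c
      · have hnn := becSum_nonneg (g := chiM a b) (fun x _ => chiM_nonneg x) n' _
          (becT_mem01 hz true)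
        linarith
      · have hnn := becSum_nonneg (g := chiM a b) (fun x _ => chiM_nonneg x) n' _
          (becT_mem01 hz false)
        linarith

lemma dichotomy_low : ∀ (K : ℕ) {z : ℝ}, z ∈ Icc (0:ℝ) 1 → z < a →
    (∀ k ≤ K, (becT false)^[k] z < a) ∨ (∃ k ≤ K, (becT false)^[k] z ∈ Icc a b) := by
  have h2ab : 2*a - a^2 ≤ b := (key_ineqs ha hb hab).1
  intro K
  induction K with
  | zero =>
      intro z hz hza
      left
      intro k hk
      interval_cases k
      simpa using hza
  | succ K ih =>
      intro z hz hza
      rcases ih hz hza with hall | ⟨k, hk, hmem⟩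
      · by_cases hcase : (becT false)^[K+1] z < a
        · left
          intro k hk
          rcases Nat.lt_or_ge k (K+1) with h | h
          · exact hall k (by omega)
          · have hkk : k = K + 1 := by omega
            rw [hkk]; exact hcase
        · right
          refine ⟨K+1, le_refl _, not_lt.mp hcase, ?_⟩
          have hprev := hall K (le_refl _)
          have hp01 := iter01 hz false K
          obtain ⟨hp0, hp1⟩ := hp01
          rw [Function.iterate_succ_apply', becT_false]
          have ha1 := ha.2.le
          nlinarith [hprev, hp0, hp1]
      · exact .inr ⟨k, by omega, hmem⟩

lemma dichotomy_high : ∀ (K : ℕ) {z : ℝ}, z ∈ Icc (0:ℝ) 1 → b < z →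
    (∀ k ≤ K, b < (becT true)^[k] z) ∨ (∃ k ≤ K, (becT true)^[k] z ∈ Icc a b) := by
  have hab2 : a ≤ b^2 := (key_ineqs ha hb hab).2.1
  intro K
  induction K with
  | zero =>
      intro z hz hbz
      left
      intro k hk
      interval_cases k
      simpa using hbz
  | succ K ih =>
      intro z hz hbz
      rcases ih hz hbz with hall | ⟨k, hk, hmem⟩
      · by_cases hcase : b < (becT true)^[K+1] z
        · left
          intro k hk
          rcases Nat.lt_or_ge k (K+1) with h | h
          · exact hall k (by omega)
          · have hkk : k = K + 1 := by omega
            rw [hkk]; exact hcase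
        · right
          refine ⟨K+1, le_refl _, ?_, not_lt.mp hcase⟩
          have hprev := hall K (le_refl _)
          have hp01 := iter01 hz true K
          obtain ⟨hp0, hp1⟩ := hp01
          rw [Function.iterate_succ_apply', becT_true]
          nlinarith [hprev, hb.1.le]
      · exact .inr ⟨k, by omega, hmem⟩

omit hb hab in
lemma deep_low {z : ℝ} (h0 : 0 ≤ z) (h1 : z < 1) (N : ℕ)
    (h : 1 - a < (1-z)^N) : (N:ℝ) * z ≤ -Real.log (1-a) := by
  have hz1 : (0:ℝ) < 1 - z := by linarith
  have hlog : Real.log (1-z) ≤ -z := by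
    have := Real.log_le_sub_one_of_pos hz1
    linarith
  have h1a : (0:ℝ) < 1 - a := by linarith [ha.2]
  have h2 : Real.log (1-a) ≤ Real.log ((1-z)^N) := Real.log_le_log h1a h.le
  rw [Real.log_pow] at h2
  have hN : (0:ℝ) ≤ (N:ℝ) := Nat.cast_nonneg N
  nlinarith [mul_le_mul_of_nonneg_left hlog hN]

omit ha hab in
lemma deep_high {z : ℝ} (h0 : 0 < z) (N : ℕ)
    (h : b < z^N) : (N:ℝ) * (1 - z) ≤ -Real.log b := by
  have hlog : Real.log z ≤ -(1-z) := by
    have := Real.log_le_sub_one_of_pos h0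
    linarith
  have h2 : Real.log b ≤ Real.log (z^N) := Real.log_le_log hb.1 h.le
  rw [Real.log_pow] at h2
  have hN : (0:ℝ) ≤ (N:ℝ) := Nat.cast_nonneg N
  nlinarith [mul_le_mul_of_nonneg_left hlog hN]

/-- The main combinatorial estimate. -/
theorem main_comb : ∀ n : ℕ, ∀ z ∈ Icc (0:ℝ) 1,
    becSum (fun x => x * (1 - x)) n z ≤
      (max (max (1/4) (-Real.log (1-a))) (-Real.log b)) *
        (1 + ((n:ℝ)+1) * becSum (chiM a b) n z) := by
  set C : ℝ := max (max (1/4) (-Real.log (1-a))) (-Real.log b) with hC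
  have hC4 : (1/4 : ℝ) ≤ C := le_trans (le_max_left _ _) (le_max_left _ _)
  have hCa : -Real.log (1-a) ≤ C := le_trans (le_max_right _ _) (le_max_left _ _)
  have hCb : -Real.log b ≤ C := le_max_right _ _
  have hCpos : (0:ℝ) < C := lt_of_lt_of_le (by norm_num) hC4
  have hchiMnn : ∀ n, ∀ z ∈ Icc (0:ℝ) 1, 0 ≤ becSum (chiM a b) n z :=
    becSum_nonneg (fun x _ => chiM_nonneg x)
  have hTle : ∀ x ∈ Icc (0:ℝ) 1, x * (1-x) ≤ x := by
    intro x hx; nlinarith [hx.1, hx.2]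
  have hTle' : ∀ x ∈ Icc (0:ℝ) 1, x * (1-x) ≤ 1 - x := by
    intro x hx; nlinarith [hx.1, hx.2]
  intro n
  induction n with
  | zero =>
      intro z hz
      have h1 : becSum (fun x => x * (1-x)) 0 z = z * (1-z) := rfl
      have h2 : z * (1-z) ≤ 1/4 := by nlinarith [sq_nonneg (z - 1/2)]
      have h3 := hchiMnn 0 z hz
      rw [h1]
      push_cast
      nlinarith [mul_nonneg hCpos.le h3]
  | succ n ih =>
      intro z hz
      push_cast
      by_cases hm : 1 ≤ becSum (chiM a b) (n+1) z
      · have hz0 := becT_mem01 hz false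
        have hz1 := becT_mem01 hz true
        have i0 := ih _ hz0
        have i1 := ih _ hz1
        have hmrec : becSum (chiM a b) (n+1) z
            = becSum (chiM a b) n (becT false z) + becSum (chiM a b) n (becT true z) :=
          becSum_succ _ _ _
        rw [becSum_succ (fun x => x * (1-x)) n z, hmrec]
        rw [hmrec] at hm
        nlinarith [i0, i1, mul_nonneg hCpos.le (by linarith :
            (0:ℝ) ≤ becSum (chiM a b) n (becT false z) + becSum (chiM a b) n (becT true z) - 1)]
      · push_neg at hm
        obtain ⟨hz0, hz1⟩ := hz
        have hznotM : ¬ (z ∈ Icc a b) := by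
          intro hmem
          exact absurd (chiM_pos ha hb hab (n+1) z hmem) (not_le.mpr hm)
        have hmnn := hchiMnn (n+1) z ⟨hz0, hz1⟩
        have hRHS : C ≤ C * (1 + ((n:ℝ)+1+1) * becSum (chiM a b) (n+1) z) := by
          nlinarith [mul_nonneg (mul_nonneg hCpos.le
            (by positivity : (0:ℝ) ≤ (n:ℝ)+1+1)) hmnn]
        rcases lt_trichotomy z a with hza | hza | hza
        · rcases dichotomy_low ha hb hab (n+1) ⟨hz0, hz1⟩ hza with hall | ⟨k, hk, hmem⟩
          · have hlast := hall (n+1) (le_refl _)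
            rw [iter_t0] at hlast
            have hz1' : z < 1 := lt_trans hza ha.2
            have hdeep := deep_low ha hz0 hz1' (2^(n+1)) (by linarith)
            have hS : becSum (fun x => x * (1-x)) (n+1) z ≤ 2^(n+1) * z := by
              calc becSum (fun x => x * (1-x)) (n+1) z
                  ≤ becSum (fun x => x) (n+1) z := becSum_mono hTle (n+1) z ⟨hz0, hz1⟩
                _ = 2^(n+1) * z := becSum_id (n+1) z
            have hcast : ((2^(n+1) : ℕ) : ℝ) = 2^(n+1) := by push_cast; ring
            rw [hcast] at hdeep
            calc becSum (fun x => x * (1-x)) (n+1) z ≤ 2^(n+1) * z := hS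
              _ ≤ -Real.log (1-a) := hdeep
              _ ≤ C := hCa
              _ ≤ _ := hRHS
          · exfalso
            have := reach ha hb hab false k (n+1) hk z ⟨hz0, hz1⟩ hmem
            linarith
        · exfalso
          refine hznotM ⟨le_of_eq hza.symm, ?_⟩
          have := (key_ineqs ha hb hab).2.2
          linarith
        · rcases lt_trichotomy z b with hzb | hzb | hzb
          · exact absurd ⟨hza.le, hzb.le⟩ hznotM
          · exact absurd ⟨hza.le, le_of_eq hzb⟩ hznotM
          · rcases dichotomy_high ha hb hab (n+1) ⟨hz0, hz1⟩ hzb with hall | ⟨k, hk, hmem⟩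
            · have hlast := hall (n+1) (le_refl _)
              rw [iter_t1] at hlast
              have hz0' : 0 < z := lt_trans hb.1 hzb
              have hdeep := deep_high hb hz0' (2^(n+1)) hlast
              have hS : becSum (fun x => x * (1-x)) (n+1) z ≤ 2^(n+1) * (1 - z) := by
                calc becSum (fun x => x * (1-x)) (n+1) z
                    ≤ becSum (fun x => 1 - x) (n+1) z := becSum_mono hTle' (n+1) z ⟨hz0, hz1⟩
                  _ = 2^(n+1) * (1-z) := becSum_one_sub (n+1) z
              have hcast : ((2^(n+1) : ℕ) : ℝ) = 2^(n+1) := by push_cast; ring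
              rw [hcast] at hdeep
              calc becSum (fun x => x * (1-x)) (n+1) z ≤ 2^(n+1) * (1-z) := hS
                _ ≤ -Real.log b := hdeep
                _ ≤ C := hCb
                _ ≤ _ := hRHS
            · exfalso
              have := reach ha hb hab true k (n+1) hk z ⟨hz0, hz1⟩ hmem
              linarith

end Main

/-! ### The main theorem -/

private lemma arith_step {C N P m S : ℝ} (hC : 0 < C) (hN : 0 ≤ N) (hP : 0 ≤ P)
    (h : S ≤ C * (1 + (N+1)*m)) : P * S ≤ (C*(N+1))*(P + P*m) := by
  nlinarith [mul_le_mul_of_nonneg_left h hP, mul_nonneg (mul_nonneg hC.le hN) hP]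

theorem stmt1 (μ : Measure (ℕ → Bool)) [IsProbabilityMeasure μ] (hμ : IsBernoulliHalf μ)
    (a b : ℝ) (ha : a ∈ Set.Ioo (0:ℝ) 1) (hb : b ∈ Set.Ioo (0:ℝ) 1)
    (hab : Real.sqrt a ≤ 1 - Real.sqrt (1 - b)) :
    (∃ c₁ : ℝ, 0 < c₁ ∧ ∀ z ∈ Set.Icc (0:ℝ) 1, ∀ n : ℕ, 1 ≤ n →
      ∫ ω, becZ z n ω * (1 - becZ z n ω) ∂μ ≤
        (n : ℝ) ^ c₁ *
          ((2:ℝ) ^ (-(n:ℝ)) + (μ {ω | becZ z n ω ∈ Set.Icc a b}).toReal)) ∧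
    (∀ f : ℝ → ℝ, ContinuousOn f (Set.Icc 0 1) →
      (∀ x ∈ Set.Icc (0:ℝ) 1, f x ∈ Set.Icc (0:ℝ) 1) →
      (∀ x ∈ Set.Ioo (0:ℝ) 1, 0 < f x) →
      ∀ a' b' : ℝ, a' ∈ Set.Ioo (0:ℝ) 1 → b' ∈ Set.Ioo (0:ℝ) 1 → a' ≤ b' →
      ∃ c₃ : ℝ, 0 < c₃ ∧ ∀ n : ℕ, ∀ z ∈ Set.Icc (0:ℝ) 1,
        (μ {ω | becZ z n ω ∈ Set.Icc a' b'}).toReal ≤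
          (2:ℝ) ^ c₃ * ∫ ω, f (becZ z n ω) ∂μ) := by
  constructor
  · -- Part 1
    set C : ℝ := max (max (1/4) (-Real.log (1-a))) (-Real.log b) with hCdef
    have hC4 : (1/4 : ℝ) ≤ C := le_trans (le_max_left _ _) (le_max_left _ _)
    have hCpos : (0:ℝ) < C := lt_of_lt_of_le (by norm_num) hC4
    set CC : ℝ := max C 1 with hCCdef
    have hCC1 : (1:ℝ) ≤ CC := le_max_right _ _
    have hCCge : C ≤ CC := le_max_left _ _
    have hCCpos : (0:ℝ) < CC := lt_of_lt_of_le one_pos hCC1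
    have hlogb : 0 ≤ Real.logb 2 CC := Real.logb_nonneg one_lt_two hCC1
    refine ⟨2 + Real.logb 2 CC, by linarith, ?_⟩
    intro z hz n hn
    have hE := bridge_integral μ hμ (fun x => x * (1-x)) n z
    have hp : (μ {ω | becZ z n ω ∈ Set.Icc a b}).toReal
        = ((1:ℝ)/2)^n * becSum (chiM a b) n z := bridge_measure μ hμ (Set.Icc a b) n z
    have hmain := main_comb ha hb hab n z hz
    rw [← hCdef] at hmain
    have hmnn : 0 ≤ becSum (chiM a b) n z :=
      becSum_nonneg (fun x _ => chiM_nonneg x) n z hz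
    have hpow : (2:ℝ) ^ (-(n:ℝ)) = ((1:ℝ)/2)^n := by
      rw [Real.rpow_neg (by norm_num : (0:ℝ) ≤ 2), Real.rpow_natCast, one_div, inv_pow]
    have hhalf : (0:ℝ) < ((1:ℝ)/2)^n := by positivity
    rcases eq_or_lt_of_le hn with hone | h2n
    · -- n = 1
      have hn1 : n = 1 := hone.symm
      subst hn1
      have hq : becSum (fun x => x * (1-x)) 1 z ≤ 1/2 := by
        rw [becSum_succ]
        have h0 := becT_mem01 hz false
        have h1 := becT_mem01 hz true
        have e0 : becT false z * (1 - becT false z) ≤ 1/4 := by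
          nlinarith [sq_nonneg (becT false z - 1/2)]
        have e1 : becT true z * (1 - becT true z) ≤ 1/4 := by
          nlinarith [sq_nonneg (becT true z - 1/2)]
        calc becSum (fun x => x * (1-x)) 0 (becT false z)
              + becSum (fun x => x * (1-x)) 0 (becT true z)
            = becT false z * (1 - becT false z) + becT true z * (1 - becT true z) := rfl
          _ ≤ 1/2 := by linarith
      have hptr : (0:ℝ) ≤ (μ {ω | becZ z 1 ω ∈ Set.Icc a b}).toReal := ENNReal.toReal_nonneg
      have hr1 : ((1:ℕ):ℝ) ^ (2 + Real.logb 2 CC) = 1 := by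
        norm_num
      rw [hE, hr1, one_mul, hpow]
      have : ((1:ℝ)/2)^1 * becSum (fun x => x * (1-x)) 1 z ≤ 1/4 := by nlinarith
      have hhalf1 : ((1:ℝ)/2)^1 = 1/2 := by norm_num
      calc ((1:ℝ)/2)^1 * becSum (fun x => x * (1-x)) 1 z ≤ 1/4 := this
        _ ≤ ((1:ℝ)/2)^1 + (μ {ω | becZ z 1 ω ∈ Set.Icc a b}).toReal := by
            rw [hhalf1]; linarith
    · -- 2 ≤ n
      have hn2 : (2:ℝ) ≤ (n:ℝ) := by exact_mod_cast h2n
      have hnpos : (0:ℝ) < (n:ℝ) := by linarith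
      have hkey : C * ((n:ℝ)+1) ≤ (n:ℝ) ^ (2 + Real.logb 2 CC) := by
        have hrp : (n:ℝ) ^ (2 + Real.logb 2 CC)
            = (n:ℝ) ^ (2:ℝ) * (n:ℝ) ^ (Real.logb 2 CC) := Real.rpow_add hnpos _ _
        have h2r : (n:ℝ) ^ (2:ℝ) = (n:ℝ)^(2:ℕ) := by
          rw [show ((2:ℝ)) = ((2:ℕ):ℝ) by norm_num, Real.rpow_natCast]
        have hlog2 : (2:ℝ) ^ (Real.logb 2 CC) ≤ (n:ℝ) ^ (Real.logb 2 CC) :=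
          Real.rpow_le_rpow (by norm_num) hn2 hlogb
        have h2l : (2:ℝ) ^ (Real.logb 2 CC) = CC :=
          Real.rpow_logb two_pos (by norm_num) hCCpos
        rw [hrp, h2r]
        rw [h2l] at hlog2
        have hstep : CC * (n:ℝ)^(2:ℕ) ≤ (n:ℝ)^(2:ℕ) * (n:ℝ) ^ (Real.logb 2 CC) := by
          rw [mul_comm]
          exact mul_le_mul_of_nonneg_left hlog2 (by positivity)
        have hsq : (0:ℝ) ≤ (n:ℝ)^(2:ℕ) - (n:ℝ) - 1 := by nlinarith
        have hC2 : C * ((n:ℝ)+1) ≤ CC * (n:ℝ)^(2:ℕ) := by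
          nlinarith [mul_nonneg (sub_nonneg.mpr hCCge) (by linarith : (0:ℝ) ≤ (n:ℝ)+1),
            mul_nonneg hCCpos.le hsq]
        linarith
      have hq : ∫ ω, becZ z n ω * (1 - becZ z n ω) ∂μ
          ≤ (C * ((n:ℝ)+1)) * (((1:ℝ)/2)^n + (μ {ω | becZ z n ω ∈ Set.Icc a b}).toReal) := by
        rw [hE, hp]
        exact arith_step hCpos (Nat.cast_nonneg n) hhalf.le hmain
      have hsum_nn : (0:ℝ) ≤ ((1:ℝ)/2)^n + (μ {ω | becZ z n ω ∈ Set.Icc a b}).toReal := by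
        have := ENNReal.toReal_nonneg (a := μ {ω | becZ z n ω ∈ Set.Icc a b})
        linarith
      calc ∫ ω, becZ z n ω * (1 - becZ z n ω) ∂μ
          ≤ (C * ((n:ℝ)+1)) * (((1:ℝ)/2)^n + (μ {ω | becZ z n ω ∈ Set.Icc a b}).toReal) := hq
        _ ≤ (n:ℝ) ^ (2 + Real.logb 2 CC)
              * (((1:ℝ)/2)^n + (μ {ω | becZ z n ω ∈ Set.Icc a b}).toReal) :=
            mul_le_mul_of_nonneg_right hkey hsum_nn
        _ = (n:ℝ) ^ (2 + Real.logb 2 CC)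
              * ((2:ℝ)^(-(n:ℝ)) + (μ {ω | becZ z n ω ∈ Set.Icc a b}).toReal) := by rw [hpow]
  · -- Part 2
    intro f hfc hfr hfpos a' b' ha' hb' hab'
    have hsub01 : Set.Icc a' b' ⊆ Set.Icc (0:ℝ) 1 := Set.Icc_subset_Icc ha'.1.le hb'.2.le
    obtain ⟨x₀, hx₀, hmin⟩ :=
      isCompact_Icc.exists_isMinOn (Set.nonempty_Icc.mpr hab') (hfc.mono hsub01)
    have hmf : 0 < f x₀ :=
      hfpos x₀ ⟨lt_of_lt_of_le ha'.1 hx₀.1, lt_of_le_of_lt hx₀.2 hb'.2⟩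
    refine ⟨max 1 (Real.logb 2 (f x₀)⁻¹), lt_of_lt_of_le one_pos (le_max_left _ _), ?_⟩
    intro n z hz
    have hp : (μ {ω | becZ z n ω ∈ Set.Icc a' b'}).toReal
        = ((1:ℝ)/2)^n * becSum (chiM a' b') n z := bridge_measure μ hμ (Set.Icc a' b') n z
    have hI := bridge_integral μ hμ f n z
    have hcomp : ∀ x ∈ Set.Icc (0:ℝ) 1, chiM a' b' x ≤ (f x₀)⁻¹ * f x := by
      intro x hx
      by_cases hxm : x ∈ Set.Icc a' b'
      · have h1 : chiM a' b' x = 1 := by unfold chiM; rw [Set.indicator_of_mem hxm]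
        rw [h1]
        have h2 := isMinOn_iff.mp hmin x hxm
        rw [← inv_mul_cancel₀ hmf.ne']
        exact mul_le_mul_of_nonneg_left h2 (inv_nonneg.mpr hmf.le)
      · have h1 : chiM a' b' x = 0 := by unfold chiM; rw [Set.indicator_of_notMem hxm]
        rw [h1]
        exact mul_nonneg (inv_nonneg.mpr hmf.le) (hfr x hx).1
    have hmono := becSum_mono hcomp n z hz
    rw [becSum_smul] at hmono
    have hfnn : 0 ≤ becSum f n z := becSum_nonneg (fun x hx => (hfr x hx).1) n z hz
    have hIpos : 0 ≤ ∫ ω, f (becZ z n ω) ∂μ := by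
      rw [hI]; positivity
    have h2c : (f x₀)⁻¹ ≤ (2:ℝ) ^ (max 1 (Real.logb 2 (f x₀)⁻¹)) := by
      calc (f x₀)⁻¹ = (2:ℝ) ^ (Real.logb 2 (f x₀)⁻¹) :=
            (Real.rpow_logb two_pos (by norm_num) (inv_pos.mpr hmf)).symm
        _ ≤ _ := Real.rpow_le_rpow_of_exponent_le one_le_two (le_max_right _ _)
    calc (μ {ω | becZ z n ω ∈ Set.Icc a' b'}).toReal
        = ((1:ℝ)/2)^n * becSum (chiM a' b') n z := hp
      _ ≤ ((1:ℝ)/2)^n * ((f x₀)⁻¹ * becSum f n z) :=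
          mul_le_mul_of_nonneg_left hmono (by positivity)
      _ = (f x₀)⁻¹ * (((1:ℝ)/2)^n * becSum f n z) := by ring
      _ = (f x₀)⁻¹ * ∫ ω, f (becZ z n ω) ∂μ := by rw [hI]
      _ ≤ (2:ℝ) ^ (max 1 (Real.logb 2 (f x₀)⁻¹)) * ∫ ω, f (becZ z n ω) ∂μ :=
          mul_le_mul_of_nonneg_right h2c hIpos
end

section
/- Fix m ∈ ℕ, z ∈ (0,1), and a, b ∈ (0,1) with √a ≤ 1 − √(1−b). Let (f_n) be the polar iterates of f(ζ) = ζ(1−ζ) and (g_n) the polar iterates of g(ζ) = (ζ(1−ζ))^{2/3}. Suppose A ≥ 0 satisfies A·f_m(ζ) ≤ f_{m+1}(ζ) for all ζ ∈ (0,1), and B ≥ 0 satisfies g_{m+1}(ζ) ≤ B·g_m(ζ) for all ζ ∈ (0,1). Then there exist constants C₁, C₂, D > 0 such that for all integers n ≥ max(m,1): D·n^{−C₁}·A^n ≤ 2^{−n} + Pr(Z_n ∈ [a,b]) and Pr(Z_n ∈ [a,b]) ≤ C₂·B^n, where (Z_n) is the BEC Bhattacharyya process started at z. (Equivalently: log₂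 A + O((log n)/n) ≤ (1/n)·log₂(2^{−n} + Pr(Z_n ∈ [a,b])), and (1/n)·log₂ Pr(Z_n ∈ [a,b]) ≤ log₂ B + O(1/n).) -/
open MeasureTheory Filter Topology

noncomputable def polarIter (f : ℝ → ℝ) : ℕ → ℝ → ℝ
  | 0 => f
  | n + 1 => fun z => (polarIter f n (z ^ 2) + polarIter f n (1 - (1 - z) ^ 2)) / 2

namespace PfAux

noncomputable def ff : ℝ → ℝ := fun x => x * (1 - x)

lemma polarIter_succ (f : ℝ → ℝ) (n : ℕ) (x : ℝ) :
    polarIter f (n+1) x = (polarIter f n (x ^ 2) + polarIter f n (1 - (1 - x) ^ 2)) / 2 := rfl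

lemma sq_mem_Ioo {x : ℝ} (hx : x ∈ Set.Ioo (0:ℝ) 1) : x ^ 2 ∈ Set.Ioo (0:ℝ) 1 := by
  obtain ⟨h1, h2⟩ := hx; constructor <;> nlinarith

lemma t0_mem_Ioo {x : ℝ} (hx : x ∈ Set.Ioo (0:ℝ) 1) : 1 - (1 - x) ^ 2 ∈ Set.Ioo (0:ℝ) 1 := by
  obtain ⟨h1, h2⟩ := hx; constructor <;> nlinarith

lemma sq_mem_Icc {x : ℝ} (hx : x ∈ Set.Icc (0:ℝ) 1) : x ^ 2 ∈ Set.Icc (0:ℝ) 1 := by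
  obtain ⟨h1, h2⟩ := hx; constructor <;> nlinarith

lemma t0_mem_Icc {x : ℝ} (hx : x ∈ Set.Icc (0:ℝ) 1) : 1 - (1 - x) ^ 2 ∈ Set.Icc (0:ℝ) 1 := by
  obtain ⟨h1, h2⟩ := hx; constructor <;> nlinarith

lemma fm_pos : ∀ (n : ℕ) (x : ℝ), x ∈ Set.Ioo (0:ℝ) 1 → 0 < polarIter ff n x := by
  intro n
  induction n with
  | zero => intro x hx; obtain ⟨h1, h2⟩ := hx; simp only [polarIter, ff]; nlinarith
  | succ k ih =>
      intro x hx
      rw [polarIter_succ]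
      have h1 := ih _ (sq_mem_Ioo hx)
      have h2 := ih _ (t0_mem_Ioo hx)
      linarith

lemma fm_le_quarter : ∀ (n : ℕ) (x : ℝ), polarIter ff n x ≤ 1/4 := by
  intro n
  induction n with
  | zero => intro x; simp only [polarIter, ff]; nlinarith [sq_nonneg (x - 1/2)]
  | succ k ih =>
      intro x
      rw [polarIter_succ]
      have h1 := ih (x ^ 2)
      have h2 := ih (1 - (1 - x) ^ 2)
      linarith

lemma fm_nonneg : ∀ (n : ℕ) (x : ℝ), x ∈ Set.Icc (0:ℝ) 1 → 0 ≤ polarIter ff n x := by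
  intro n
  induction n with
  | zero => intro x hx; obtain ⟨h1, h2⟩ := hx; simp only [polarIter, ff]; nlinarith
  | succ k ih =>
      intro x hx
      rw [polarIter_succ]
      have h1 := ih _ (sq_mem_Icc hx)
      have h2 := ih _ (t0_mem_Icc hx)
      linarith

lemma fm_le_id : ∀ (n : ℕ) (x : ℝ), x ∈ Set.Icc (0:ℝ) 1 → polarIter ff n x ≤ x := by
  intro n
  induction n with
  | zero => intro x hx; obtain ⟨h1, h2⟩ := hx; simp only [polarIter, ff]; nlinarith
  | succ k ih =>
      intro x hx
      obtain ⟨hx1, hx2⟩ := hx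
      rw [polarIter_succ]
      have h1 := ih _ (sq_mem_Icc ⟨hx1, hx2⟩)
      have h2 := ih _ (t0_mem_Icc ⟨hx1, hx2⟩)
      nlinarith

lemma fm_ge : ∀ (n : ℕ) (x : ℝ), x ∈ Set.Icc (0:ℝ) 1 →
    x - 3 ^ n * x ^ 2 ≤ polarIter ff n x := by
  intro n
  induction n with
  | zero => intro x hx; simp only [polarIter, ff]; nlinarith
  | succ k ih =>
      intro x hx
      obtain ⟨hx1, hx2⟩ := hx
      rw [polarIter_succ]
      have h1 := ih _ (sq_mem_Icc ⟨hx1, hx2⟩)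
      have h2 := ih _ (t0_mem_Icc ⟨hx1, hx2⟩)
      have h3 : (0:ℝ) ≤ 3 ^ k := by positivity
      have h4 : (3:ℝ) ^ (k+1) = 3 * 3 ^ k := by ring
      have m1 : (3:ℝ)^k * (x^2)^2 ≤ 3^k * x^2 :=
        mul_le_mul_of_nonneg_left
          (by nlinarith [mul_nonneg (sq_nonneg x) (show (0:ℝ) ≤ 1 - x^2 by nlinarith)]) h3
      have m2 : (3:ℝ)^k * (1-(1-x)^2)^2 ≤ 3^k * (4*x^2) :=
        mul_le_mul_of_nonneg_left
          (by nlinarith [mul_nonneg (sq_nonneg x) (show (0:ℝ) ≤ 4 - (2-x)^2 by nlinarith)]) h3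
      nlinarith [h1, h2, m1, m2]

lemma fm_symm : ∀ (n : ℕ) (x : ℝ), polarIter ff n (1 - x) = polarIter ff n x := by
  intro n
  induction n with
  | zero => intro x; simp only [polarIter, ff]; ring
  | succ k ih =>
      intro x
      rw [polarIter_succ, polarIter_succ]
      have e1 : (1 - x) ^ 2 = 1 - (1 - (1-x)^2) := by ring
      have e2 : 1 - (1 - (1 - x)) ^ 2 = 1 - x ^ 2 := by ring
      rw [e2]
      rw [show polarIter ff k ((1-x)^2) = polarIter ff k (1 - (1 - (1-x)^2)) from by rw [← e1]]
      rw [ih (1 - (1-x)^2), ih (x^2)]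
      ring

lemma fm_step_le : ∀ (n : ℕ) (x : ℝ),
    polarIter ff (n+1) x ≤ polarIter ff n x - (polarIter ff n x) ^ 2 := by
  intro n
  induction n with
  | zero =>
      intro x
      rw [polarIter_succ]
      simp only [polarIter, ff]
      nlinarith [sq_nonneg ((x^2 * (1 - x^2)) - ((1 - (1-x)^2) * (1 - (1 - (1-x)^2))))]
  | succ k ih =>
      intro x
      have h1 := ih (x ^ 2)
      have h2 := ih (1 - (1 - x) ^ 2)
      have e1 : polarIter ff (k+1+1) x =
          (polarIter ff (k+1) (x^2) + polarIter ff (k+1) (1-(1-x)^2))/2 := rfl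
      have e2 : polarIter ff (k+1) x =
          (polarIter ff k (x^2) + polarIter ff k (1-(1-x)^2))/2 := rfl
      rw [e1, e2]
      nlinarith [sq_nonneg (polarIter ff k (x^2) - polarIter ff k (1 - (1-x)^2))]




/-- the steering policy -/
noncomputable def sg (b x : ℝ) : ℝ :=
  if x ≤ 1 - Real.sqrt (1 - b) then 1 - (1 - x) ^ 2 else x ^ 2

lemma c_pos {b : ℝ} (hb1 : b < 1) (hb0 : 0 < b) : 0 < 1 - Real.sqrt (1 - b) := by
  have h : Real.sqrt (1 - b) < Real.sqrt 1 := Real.sqrt_lt_sqrt (by linarith) (by linarith)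
  rw [Real.sqrt_one] at h
  linarith

lemma c_lt_one {b : ℝ} (hb1 : b < 1) : 1 - Real.sqrt (1 - b) < 1 := by
  have : 0 < Real.sqrt (1 - b) := Real.sqrt_pos.2 (by linarith)
  linarith

lemma one_sub_c_sq {b : ℝ} (hb1 : b ≤ 1) : (1 - (1 - Real.sqrt (1 - b))) ^ 2 = 1 - b := by
  simp only [sub_sub_cancel]
  exact Real.sq_sqrt (by linarith)

lemma c_le_b {b : ℝ} (hb0 : 0 < b) (hb1 : b < 1) : 1 - Real.sqrt (1 - b) ≤ b := by
  have h1 : (1 - b) ≤ Real.sqrt (1 - b) := by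
    have := Real.sqrt_le_sqrt (show (1-b)^2 ≤ 1-b by nlinarith)
    rwa [Real.sqrt_sq (by linarith)] at this
  linarith

lemma a_le_c {a b : ℝ} (ha0 : 0 < a) (ha1 : a < 1)
    (hab : Real.sqrt a ≤ 1 - Real.sqrt (1 - b)) : a ≤ 1 - Real.sqrt (1 - b) := by
  have h1 : a ≤ Real.sqrt a := by
    have := Real.sqrt_le_sqrt (show a^2 ≤ a by nlinarith)
    rwa [Real.sqrt_sq (by linarith)] at this
  linarith

lemma sg_mem_Ioo {b x : ℝ} (hx : x ∈ Set.Ioo (0:ℝ) 1) : sg b x ∈ Set.Ioo (0:ℝ) 1 := by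
  obtain ⟨h1, h2⟩ := hx
  unfold sg; split <;> constructor <;> nlinarith

lemma sg_iter_Ioo {b x : ℝ} (hx : x ∈ Set.Ioo (0:ℝ) 1) (k : ℕ) :
    (sg b)^[k] x ∈ Set.Ioo (0:ℝ) 1 := by
  induction k with
  | zero => simpa
  | succ j ih => rw [Function.iterate_succ_apply']; exact sg_mem_Ioo ih

lemma sg_of_gt {b v : ℝ} (h : 1 - Real.sqrt (1-b) < v) : sg b v = v ^ 2 :=
  if_neg (not_le.2 h)

lemma sg_of_le {b v : ℝ} (h : v ≤ 1 - Real.sqrt (1-b)) : sg b v = 1 - (1 - v) ^ 2 :=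
  if_pos h

section

variable {a b : ℝ} (ha0 : 0 < a) (ha1 : a < 1) (hb0 : 0 < b) (hb1 : b < 1)
  (hab : Real.sqrt a ≤ 1 - Real.sqrt (1 - b))

include ha0 ha1 hb0 hb1 hab

/-- policy keeps [a,b] invariant -/
lemma sg_stay {x : ℝ} (hx : x ∈ Set.Icc a b) : sg b x ∈ Set.Icc a b := by
  obtain ⟨h1, h2⟩ := hx
  have hc := c_pos hb1 hb0
  have hcb := c_le_b hb0 hb1
  have hcsq := one_sub_c_sq (b := b) (le_of_lt hb1)
  unfold sg
  split
  · rename_i h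
    constructor
    · nlinarith
    · have : (1 - (1 - Real.sqrt (1-b)))^2 ≤ (1-x)^2 := by
        apply sq_le_sq' <;> nlinarith [Real.sqrt_nonneg (1-b)]
      nlinarith
  · rename_i h
    push_neg at h
    have hsa : Real.sqrt a < x := lt_of_le_of_lt hab h
    have : a < x ^ 2 := by
      have := Real.sq_sqrt (le_of_lt ha0)
      nlinarith [Real.sqrt_nonneg a]
    constructor
    · linarith
    · nlinarith

lemma sg_iter_stay {x : ℝ} (hx : x ∈ Set.Icc a b) (k : ℕ) : (sg b)^[k] x ∈ Set.Icc a b := by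
  induction k with
  | zero => simpa
  | succ j ih => rw [Function.iterate_succ_apply']; exact sg_stay ha0 ha1 hb0 hb1 hab ih

/-- climbing lemma -/
lemma climb : ∀ (k : ℕ) (y : ℝ), 0 < y → y ≤ b → (1 - y) ^ (2 ^ k) ≤ 1 - a →
    (sg b)^[k] y ∈ Set.Icc a b := by
  intro k
  induction k with
  | zero =>
      intro y hy0 hyb h
      simp only [pow_zero, pow_one] at h
      simp only [Function.iterate_zero_apply]
      exact ⟨by linarith, hyb⟩
  | succ j ih =>
      intro y hy0 hyb h
      rcases le_or_gt a y with hay | hay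
      · exact sg_iter_stay ha0 ha1 hb0 hb1 hab ⟨hay, hyb⟩ _
      · have hyc : y ≤ 1 - Real.sqrt (1 - b) := le_trans (le_of_lt hay) (a_le_c ha0 ha1 hab)
        have hsg : sg b y = 1 - (1 - y) ^ 2 := if_pos hyc
        rw [Function.iterate_succ_apply, hsg]
        have hcsq := one_sub_c_sq (b := b) (le_of_lt hb1)
        have hcb := c_le_b hb0 hb1
        apply ih _ (by nlinarith) (by nlinarith)
        have e : (1 - (1 - (1-y)^2)) = (1-y)^2 := by ring
        rw [e, ← pow_mul, show 2 * 2 ^ j = 2 ^ (j+1) by ring]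
        exact h

end

/-- Bernoulli-type bound -/
lemma bern {y : ℝ} (hy0 : 0 ≤ y) (hy1 : y ≤ 1) (N : ℕ) : (1 - y) ^ N * (1 + N * y) ≤ 1 := by
  have h1 : 1 + (N:ℝ) * y ≤ (1 + y) ^ N := one_add_mul_le_pow (by linarith) N
  have h2 : (0:ℝ) ≤ (1 - y) ^ N := pow_nonneg (by linarith) N
  calc (1 - y) ^ N * (1 + N * y) ≤ (1 - y) ^ N * (1 + y) ^ N :=
        mul_le_mul_of_nonneg_left h1 h2
    _ = ((1 - y) * (1 + y)) ^ N := (mul_pow _ _ _).symm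
    _ ≤ 1 := pow_le_one₀ (by nlinarith) (by nlinarith)

/-- power decay bound: (1-y)^(2^k) ≤ 1-a when 2^k y ≥ a/(1-a) -/
lemma pow_decay {y aa : ℝ} (hy0 : 0 ≤ y) (hy1 : y ≤ 1) (ha0 : 0 < aa) (ha1 : aa < 1)
    (k : ℕ) (h : aa / (1 - aa) ≤ 2 ^ k * y) : (1 - y) ^ (2 ^ k) ≤ 1 - aa := by
  have hb1' := bern hy0 hy1 (2 ^ k)
  have hcast : ((2 ^ k : ℕ) : ℝ) = (2:ℝ) ^ k := by push_cast; ring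
  rw [hcast] at hb1'
  have hpos : (0:ℝ) < 1 + (2:ℝ)^k * y := by positivity
  have h2 : (1 - y) ^ (2 ^ k) ≤ 1 / (1 + (2:ℝ) ^ k * y) := by
    rw [le_div_iff₀ hpos]; exact hb1'
  have h3 : 1 / (1 + (2:ℝ) ^ k * y) ≤ 1 - aa := by
    rw [div_le_iff₀ hpos]
    have ha' : (0:ℝ) < 1 - aa := by linarith
    have key : aa ≤ (1 - aa) * ((2:ℝ)^k * y) := by
      have := mul_le_mul_of_nonneg_left h (le_of_lt ha')
      rwa [mul_div_cancel₀ _ (ne_of_gt ha')] at this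
    nlinarith
  linarith

section
variable {a b : ℝ} (ha0 : 0 < a) (ha1 : a < 1) (hb0 : 0 < b) (hb1 : b < 1)
  (hab : Real.sqrt a ≤ 1 - Real.sqrt (1 - b))
include ha0 ha1 hb0 hb1 hab

/-- climbing, multiplicative form -/
lemma climb' (k : ℕ) (y : ℝ) (hy0 : 0 < y) (hyb : y ≤ b) (h : a / (1-a) ≤ 2 ^ k * y) :
    (sg b)^[k] y ∈ Set.Icc a b :=
  climb ha0 ha1 hb0 hb1 hab k y hy0 hyb
    (pow_decay (le_of_lt hy0) (by linarith) ha0 ha1 k h)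

end



open Classical in
/-- number of steps needed to steer into [a,b] -/
noncomputable def ell (a b x : ℝ) : ℕ :=
  if h : ∃ k, (sg b)^[k] x ∈ Set.Icc a b then Nat.find h else 0

section
variable {a b : ℝ} (ha0 : 0 < a) (ha1 : a < 1) (hb0 : 0 < b) (hb1 : b < 1)
  (hab : Real.sqrt a ≤ 1 - Real.sqrt (1 - b))
include ha0 ha1 hb0 hb1 hab

/-- master steering lemma -/
lemma master (y : ℝ) (hy : y ∈ Set.Ioo (0:ℝ) 1) (k₁ k₂ : ℕ)
    (h1 : Real.sqrt (1-b) / (1 - Real.sqrt (1-b)) ≤ 2 ^ k₁ * (1 - y))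
    (h2 : a / (1-a) ≤ 2 ^ k₂ * min y (b ^ 2)) :
    (sg b)^[k₁ + k₂] y ∈ Set.Icc a b := by
  classical
  obtain ⟨hy0, hy1⟩ := hy
  have hc0 : 0 < 1 - Real.sqrt (1-b) := c_pos hb1 hb0
  have hc1 : 1 - Real.sqrt (1-b) ≤ b := c_le_b hb0 hb1
  have hminpos : 0 < min y (b ^ 2) := lt_min hy0 (by positivity)
  have h2y : a / (1-a) ≤ 2 ^ k₂ * y :=
    le_trans h2 (mul_le_mul_of_nonneg_left (min_le_left _ _) (by positivity))
  rcases le_or_gt y b with hyb | hyb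
  · -- already low: climb all the way
    apply climb' ha0 ha1 hb0 hb1 hab _ _ hy0 hyb
    calc a / (1-a) ≤ 2 ^ k₂ * y := h2y
      _ ≤ 2 ^ (k₁ + k₂) * y := by
          apply mul_le_mul_of_nonneg_right _ (le_of_lt hy0)
          apply pow_le_pow_right₀ (by norm_num) (by omega)
  · -- high: descend by squaring, then climb
    have hsq : ∀ j : ℕ, (∀ i, i < j → b < (sg b)^[i] y) → (sg b)^[j] y = y ^ (2 ^ j) := by
      intro j
      induction j with
      | zero => intro _; simp
      | succ i ih =>
          intro hyp
          rw [Function.iterate_succ_apply']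
          have hprev : (sg b)^[i] y = y ^ (2 ^ i) := ih (fun i' hi' => hyp i' (by omega))
          have hgt : b < (sg b)^[i] y := hyp i (by omega)
          rw [sg_of_gt (by linarith), hprev, ← pow_mul,
            show 2 ^ i * 2 = 2 ^ (i+1) by ring]
    -- there is a landing index ≤ k₁
    have hexle : ∃ i, i ≤ k₁ ∧ (sg b)^[i] y ≤ b := by
      by_contra hno
      push_neg at hno
      have hall : ∀ i, i < k₁ + 1 → b < (sg b)^[i] y := fun i hi => hno i (by omega)
      have hk₁ : (sg b)^[k₁] y = y ^ (2 ^ k₁) :=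
        hsq k₁ (fun i hi => hall i (by omega))
      have hbern := bern (y := 1 - y) (by linarith) (by linarith) (2 ^ k₁)
      simp only [sub_sub_cancel] at hbern
      have hcast : ((2 ^ k₁ : ℕ) : ℝ) = (2:ℝ) ^ k₁ := by push_cast; ring
      rw [hcast] at hbern
      have hpos : (0:ℝ) < 1 + (2:ℝ)^k₁ * (1 - y) := by nlinarith [pow_pos (show (0:ℝ)<2 by norm_num) k₁]
      have hyN : y ^ (2 ^ k₁) ≤ 1 / (1 + (2:ℝ)^k₁ * (1-y)) := by
        rw [le_div_iff₀ hpos]; exact hbern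
      have hcc : 1 / (1 + (2:ℝ)^k₁ * (1-y)) ≤ 1 - Real.sqrt (1-b) := by
        rw [div_le_iff₀ hpos]
        have key : Real.sqrt (1-b) ≤ (1 - Real.sqrt (1-b)) * ((2:ℝ)^k₁ * (1-y)) := by
          have := mul_le_mul_of_nonneg_left h1 (le_of_lt hc0)
          rwa [mul_div_cancel₀ _ (ne_of_gt hc0)] at this
        nlinarith
      have : (sg b)^[k₁] y ≤ b := by
        rw [hk₁]; linarith
      exact absurd this (not_le.2 (hno k₁ le_rfl))
    obtain ⟨i₀, hi₀le, hi₀⟩ := hexle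
    have hex : ∃ j, (sg b)^[j] y ≤ b := ⟨i₀, hi₀⟩
    have hjP := Nat.find_spec hex
    have hjle : Nat.find hex ≤ k₁ := le_trans (Nat.find_le hi₀) hi₀le
    have hj1 : 1 ≤ Nat.find hex := by
      rcases Nat.eq_zero_or_pos (Nat.find hex) with h0 | h1
      · exfalso
        have : (sg b)^[0] y ≤ b := h0 ▸ hjP
        simp only [Function.iterate_zero_apply] at this
        linarith
      · exact h1
    obtain ⟨j', hj'⟩ : ∃ j', Nat.find hex = j' + 1 := ⟨Nat.find hex - 1, by omega⟩
    rw [hj'] at hjP hjle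
    have hprev_gt : b < (sg b)^[j'] y := by
      have := Nat.find_min hex (m := j') (by omega)
      push_neg at this
      exact this
    have hw_eq : (sg b)^[j'+1] y = ((sg b)^[j'] y) ^ 2 := by
      rw [Function.iterate_succ_apply']
      exact sg_of_gt (by linarith)
    set w := (sg b)^[j'+1] y with hw_def
    have hwIoo : w ∈ Set.Ioo (0:ℝ) 1 := sg_iter_Ioo ⟨hy0, hy1⟩ _
    have hw_ge : b ^ 2 ≤ w := by
      rw [hw_eq]
      nlinarith
    -- climb from w
    have hclimb : (sg b)^[(k₁ + k₂) - (j'+1)] w ∈ Set.Icc a b := by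
      apply climb' ha0 ha1 hb0 hb1 hab _ _ hwIoo.1 hjP
      calc a / (1-a) ≤ 2 ^ k₂ * min y (b^2) := h2
        _ ≤ 2 ^ k₂ * w := mul_le_mul_of_nonneg_left
            (le_trans (min_le_right _ _) hw_ge) (by positivity)
        _ ≤ 2 ^ ((k₁+k₂) - (j'+1)) * w := by
            apply mul_le_mul_of_nonneg_right _ (le_of_lt hwIoo.1)
            apply pow_le_pow_right₀ (by norm_num) (by omega)
    have : (sg b)^[((k₁+k₂) - (j'+1)) + (j'+1)] y ∈ Set.Icc a b := by
      rw [Function.iterate_add_apply]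
      exact hclimb
    rwa [show ((k₁+k₂) - (j'+1)) + (j'+1) = k₁ + k₂ by omega] at this

lemma ell_exists (x : ℝ) (hx : x ∈ Set.Ioo (0:ℝ) 1) :
    ∃ k, (sg b)^[k] x ∈ Set.Icc a b := by
  obtain ⟨hx0, hx1⟩ := hx
  obtain ⟨k₁, hk₁⟩ := pow_unbounded_of_one_lt
    (Real.sqrt (1-b) / (1 - Real.sqrt (1-b)) / (1-x)) (by norm_num : (1:ℝ) < 2)
  obtain ⟨k₂, hk₂⟩ := pow_unbounded_of_one_lt
    (a / (1-a) / (min x (b^2))) (by norm_num : (1:ℝ) < 2)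
  have hminpos : 0 < min x (b ^ 2) := lt_min hx0 (by positivity)
  refine ⟨k₁ + k₂, master ha0 ha1 hb0 hb1 hab x ⟨hx0, hx1⟩ k₁ k₂ ?_ ?_⟩
  · rw [div_lt_iff₀ (by linarith)] at hk₁
    linarith
  · rw [div_lt_iff₀ hminpos] at hk₂
    linarith

lemma ell_spec (x : ℝ) (hx : x ∈ Set.Ioo (0:ℝ) 1) :
    (sg b)^[ell a b x] x ∈ Set.Icc a b := by
  classical
  have h := ell_exists ha0 ha1 hb0 hb1 hab x hx
  simp only [ell]
  rw [dif_pos h]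
  exact Nat.find_spec h

lemma ell_le {x : ℝ} {k : ℕ} (h : (sg b)^[k] x ∈ Set.Icc a b) : ell a b x ≤ k := by
  classical
  simp only [ell]
  rw [dif_pos ⟨k, h⟩]
  exact Nat.find_le h

lemma ell_succ (x : ℝ) (hx : x ∈ Set.Ioo (0:ℝ) 1) (h1 : 1 ≤ ell a b x) :
    ell a b (sg b x) ≤ ell a b x - 1 := by
  have hs := ell_spec ha0 ha1 hb0 hb1 hab x hx
  obtain ⟨k', hk'⟩ : ∃ k', ell a b x = k' + 1 := ⟨ell a b x - 1, by omega⟩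
  rw [hk', Function.iterate_succ_apply] at hs
  have := ell_le ha0 ha1 hb0 hb1 hab (x := sg b x) hs
  omega

lemma ell_zero_mem (x : ℝ) (hx : x ∈ Set.Ioo (0:ℝ) 1) (h : ell a b x = 0) :
    x ∈ Set.Icc a b := by
  have hs := ell_spec ha0 ha1 hb0 hb1 hab x hx
  rwa [h, Function.iterate_zero_apply] at hs

end

open Classical in
/-- indicator of [a,b] -/
noncomputable def indab (a b : ℝ) : ℝ → ℝ := fun y => if y ∈ Set.Icc a b then 1 else 0

lemma indab_nonneg (a b y : ℝ) : 0 ≤ indab a b y := by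
  unfold indab; split <;> norm_num

lemma J_nonneg (a b : ℝ) : ∀ (n : ℕ) (y : ℝ), 0 ≤ polarIter (indab a b) n y := by
  intro n
  induction n with
  | zero => intro y; exact indab_nonneg a b y
  | succ k ih =>
      intro y
      rw [polarIter_succ]
      have h1 := ih (y ^ 2)
      have h2 := ih (1 - (1 - y) ^ 2)
      linarith

section
variable {a b : ℝ} (ha0 : 0 < a) (ha1 : a < 1) (hb0 : 0 < b) (hb1 : b < 1)
  (hab : Real.sqrt a ≤ 1 - Real.sqrt (1 - b))
include ha0 ha1 hb0 hb1 hab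

lemma J_ge : ∀ (n : ℕ) (x : ℝ), x ∈ Set.Ioo (0:ℝ) 1 → ell a b x ≤ n →
    (2:ℝ)⁻¹ ^ n ≤ polarIter (indab a b) n x := by
  intro n
  induction n with
  | zero =>
      intro x hx hell
      have hmem : x ∈ Set.Icc a b :=
        ell_zero_mem ha0 ha1 hb0 hb1 hab x hx (Nat.le_zero.1 hell)
      simp only [pow_zero, polarIter]
      unfold indab
      rw [if_pos hmem]
  | succ k ih =>
      intro x hx hell
      have hsgIoo : sg b x ∈ Set.Ioo (0:ℝ) 1 := sg_mem_Ioo hx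
      have hsgell : ell a b (sg b x) ≤ k := by
        rcases Nat.eq_zero_or_pos (ell a b x) with h0 | h1
        · have hmem : x ∈ Set.Icc a b := ell_zero_mem ha0 ha1 hb0 hb1 hab x hx h0
          have : sg b x ∈ Set.Icc a b := sg_stay ha0 ha1 hb0 hb1 hab hmem
          have h := ell_le ha0 ha1 hb0 hb1 hab (x := sg b x) (k := 0)
            (by simpa using this)
          omega
        · have := ell_succ ha0 ha1 hb0 hb1 hab x hx h1
          omega
      have hJ := ih (sg b x) hsgIoo hsgell
      rw [polarIter_succ]
      have hJ1 := J_nonneg a b k (x ^ 2)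
      have hJ2 := J_nonneg a b k (1 - (1 - x) ^ 2)
      rcases le_or_gt x (1 - Real.sqrt (1-b)) with hc | hc
      · rw [sg_of_le hc] at hJ
        have : (2:ℝ)⁻¹ ^ (k+1) = ((2:ℝ)⁻¹ ^ k) / 2 := by ring
        rw [this]
        linarith
      · rw [sg_of_gt hc] at hJ
        have : (2:ℝ)⁻¹ ^ (k+1) = ((2:ℝ)⁻¹ ^ k) / 2 := by ring
        rw [this]
        linarith

end

/-- small-u margin for the drop case -/
lemma margin_low (m : ℕ) {u ε₀ : ℝ} (hu0 : 0 < u) (hε : 0 < ε₀) (hε4 : ε₀ ≤ 1/4)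
    (hu2 : (1 + 4 * 3 ^ m) * u ≤ 2 * ε₀) :
    2 * (1 - ε₀) * u ≤ polarIter ff m (1 - (1 - u) ^ 2) := by
  have hu1 : u ≤ 1/2 := by nlinarith [pow_pos (show (0:ℝ) < 3 by norm_num) m]
  have ht0 : (0:ℝ) ≤ 1 - (1 - u) ^ 2 := by nlinarith
  have ht1 : 1 - (1 - u) ^ 2 ≤ 1 := by nlinarith
  have hfm := fm_ge m (1 - (1 - u) ^ 2) ⟨ht0, ht1⟩
  have h3 : (0:ℝ) ≤ 3 ^ m := by positivity
  have hsq : (1 - (1 - u) ^ 2) ^ 2 ≤ 4 * u ^ 2 := by nlinarith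
  have hmul : (3:ℝ) ^ m * (1 - (1 - u) ^ 2) ^ 2 ≤ 3 ^ m * (4 * u ^ 2) :=
    mul_le_mul_of_nonneg_left hsq h3
  nlinarith

lemma A_le_one_sub (m : ℕ) (A : ℝ)
    (hA : A * polarIter ff m (1/2) ≤ polarIter ff (m+1) (1/2)) :
    A ≤ 1 - polarIter ff m (1/2) := by
  have hpos : 0 < polarIter ff m (1/2) := fm_pos m (1/2) (by norm_num)
  have hstep := fm_step_le m (1/2)
  nlinarith



/-- the small-u threshold -/
noncomputable def z2 (m : ℕ) : ℝ := polarIter ff m (1/2) / (1 + 4 * 3 ^ m)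

lemma z2_pos (m : ℕ) : 0 < z2 m :=
  div_pos (fm_pos m (1/2) (by norm_num)) (by positivity)

lemma z2_eq (m : ℕ) : (1 + 4 * 3 ^ m) * z2 m = polarIter ff m (1/2) := by
  unfold z2
  field_simp

set_option maxHeartbeats 4000000 in
lemma lower_core (a b z A : ℝ) (m : ℕ)
    (ha0 : 0 < a) (ha1 : a < 1) (hb0 : 0 < b) (hb1 : b < 1)
    (hab : Real.sqrt a ≤ 1 - Real.sqrt (1 - b)) (hz : z ∈ Set.Ioo (0:ℝ) 1) (hA0 : 0 ≤ A)
    (hA : ∀ ζ ∈ Set.Ioo (0:ℝ) 1, A * polarIter ff m ζ ≤ polarIter ff (m+1) ζ) :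
    ∃ (D₀ : ℝ) (N₀ : ℕ), 0 < D₀ ∧ A ≤ 1 ∧
      ∀ n, N₀ ≤ n → D₀ * A ^ n ≤ polarIter (indab a b) n z := by
  classical
  have hc0 : 0 < 1 - Real.sqrt (1-b) := c_pos hb1 hb0
  have hc1 : 1 - Real.sqrt (1-b) < 1 := c_lt_one hb1
  have hcb : 1 - Real.sqrt (1-b) ≤ b := c_le_b hb0 hb1
  have hac : a ≤ 1 - Real.sqrt (1-b) := a_le_c ha0 ha1 hab
  have hε : 0 < polarIter ff m (1/2) := fm_pos m (1/2) (by norm_num)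
  have hε4 : polarIter ff m (1/2) ≤ 1/4 := fm_le_quarter m (1/2)
  have hAle : A ≤ 1 - polarIter ff m (1/2) := A_le_one_sub m A (hA (1/2) (by norm_num))
  have hA1 : A ≤ 1 := by linarith
  have h3m : (0:ℝ) < 3 ^ m := by positivity
  have hz₂pos : 0 < z2 m := z2_pos m
  have hz₂eq := z2_eq m
  have getK : ∀ v C : ℝ, 0 < v → ∃ k : ℕ, C ≤ 2 ^ k * v := by
    intro v C hv
    obtain ⟨k, hk⟩ := pow_unbounded_of_one_lt (C / v) (by norm_num : (1:ℝ) < 2)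
    exact ⟨k, by rw [div_lt_iff₀ hv] at hk; linarith⟩
  obtain ⟨K₅, hK₅⟩ := getK (1 - (1 - Real.sqrt (1-b)))
    (Real.sqrt (1-b) / (1 - Real.sqrt (1-b))) (by linarith)
  obtain ⟨K₆, hK₆⟩ := getK (min (1 - Real.sqrt (1-b)) (b^2))
    (a / (1-a)) (lt_min hc0 (by positivity))
  obtain ⟨K₇, hK₇⟩ := getK (min ((z2 m)^2) (b^2)) (a / (1-a))
    (lt_min (pow_pos hz₂pos 2) (pow_pos hb0 2))
  obtain ⟨K₈, hK₈⟩ := getK ((z2 m)^2) (Real.sqrt (1-b) / (1 - Real.sqrt (1-b)))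
    (pow_pos hz₂pos 2)
  obtain ⟨Ka, hKa⟩ := getK (1-b) (Real.sqrt (1-b) / (1 - Real.sqrt (1-b))) (by linarith)
  obtain ⟨Kb, hKb⟩ := getK (min (a^2) (b^2)) (a / (1-a))
    (lt_min (by positivity) (by positivity))
  obtain ⟨Ka', hKa'⟩ := getK ((1-b)^2) (Real.sqrt (1-b) / (1 - Real.sqrt (1-b)))
    (pow_pos (by linarith : (0:ℝ) < 1 - b) 2)
  obtain ⟨Kb', hKb'⟩ := getK (min a (b^2)) (a / (1-a)) (lt_min ha0 (by positivity))
  set L₀ : ℕ := max (Ka+Kb) (Ka'+Kb') with hL₀_def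
  set N₀ : ℕ := max (max (K₅+K₇) (K₆+K₈)) (max L₀ (ell a b z)) with hN₀_def
  set D₀ : ℝ := (2:ℝ)⁻¹ ^ N₀ with hD₀_def
  have hD₀pos : 0 < D₀ := by positivity
  have hL₀sq : ∀ x : ℝ, x ∈ Set.Icc a b → ell a b (x^2) ≤ L₀ := by
    intro x hx
    obtain ⟨hx1, hx2⟩ := hx
    have hxIoo : x ∈ Set.Ioo (0:ℝ) 1 := ⟨by linarith, by linarith⟩
    have hyp1 : Real.sqrt (1-b) / (1 - Real.sqrt (1-b)) ≤ 2 ^ Ka * (1 - x^2) := by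
      have h' : (1:ℝ) - b ≤ 1 - x^2 := by nlinarith
      have h'' : (2:ℝ)^Ka * (1-b) ≤ 2^Ka * (1 - x^2) :=
        mul_le_mul_of_nonneg_left h' (by positivity)
      linarith
    have hyp2 : a / (1-a) ≤ 2 ^ Kb * min (x^2) (b^2) := by
      have h' : min (a^2) (b^2) ≤ min (x^2) (b^2) := min_le_min (by nlinarith) le_rfl
      have h'' : (2:ℝ)^Kb * min (a^2) (b^2) ≤ 2^Kb * min (x^2) (b^2) :=
        mul_le_mul_of_nonneg_left h' (by positivity)
      linarith
    have hm := master ha0 ha1 hb0 hb1 hab (x^2) (sq_mem_Ioo hxIoo) Ka Kb hyp1 hyp2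
    have := ell_le ha0 ha1 hb0 hb1 hab hm
    omega
  have hL₀t0 : ∀ x : ℝ, x ∈ Set.Icc a b → ell a b (1 - (1-x)^2) ≤ L₀ := by
    intro x hx
    obtain ⟨hx1, hx2⟩ := hx
    have hxIoo : x ∈ Set.Ioo (0:ℝ) 1 := ⟨by linarith, by linarith⟩
    have hyp1 : Real.sqrt (1-b) / (1 - Real.sqrt (1-b)) ≤ 2 ^ Ka' * (1 - (1-(1-x)^2)) := by
      have h' : ((1:ℝ) - b)^2 ≤ 1 - (1-(1-x)^2) := by nlinarith
      have h'' : (2:ℝ)^Ka' * (1-b)^2 ≤ 2^Ka' * (1 - (1-(1-x)^2)) :=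
        mul_le_mul_of_nonneg_left h' (by positivity)
      linarith
    have hyp2 : a / (1-a) ≤ 2 ^ Kb' * min (1-(1-x)^2) (b^2) := by
      have h' : min a (b^2) ≤ min (1-(1-x)^2) (b^2) := min_le_min (by nlinarith) le_rfl
      have h'' : (2:ℝ)^Kb' * min a (b^2) ≤ 2^Kb' * min (1-(1-x)^2) (b^2) :=
        mul_le_mul_of_nonneg_left h' (by positivity)
      linarith
    have hm := master ha0 ha1 hb0 hb1 hab (1-(1-x)^2) (t0_mem_Ioo hxIoo) Ka' Kb' hyp1 hyp2
    have := ell_le ha0 ha1 hb0 hb1 hab hm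
    omega
  have key : ∀ n, N₀ ≤ n → ∀ x, x ∈ Set.Ioo (0:ℝ) 1 → ell a b x ≤ n →
      D₀ * A ^ n * polarIter ff m x ≤ polarIter (indab a b) n x := by
    intro n hn
    induction n, hn using Nat.le_induction with
    | base =>
        intro x hx hell
        have hJ := J_ge ha0 ha1 hb0 hb1 hab N₀ x hx hell
        have hfm1 : polarIter ff m x ≤ 1/4 := fm_le_quarter m x
        have hfm0 : 0 ≤ polarIter ff m x := fm_nonneg m x ⟨le_of_lt hx.1, le_of_lt hx.2⟩
        have hApow : A ^ N₀ ≤ 1 := pow_le_one₀ hA0 hA1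
        have hApow0 : 0 ≤ A ^ N₀ := pow_nonneg hA0 _
        calc D₀ * A ^ N₀ * polarIter ff m x ≤ D₀ * 1 * (1/4) := by
              apply mul_le_mul _ hfm1 hfm0 (by positivity)
              nlinarith
          _ ≤ D₀ := by nlinarith
          _ ≤ polarIter (indab a b) N₀ x := by rw [hD₀_def]; exact hJ
    | succ n hn ih =>
        intro x hx hellx
        have hxIcc : x ∈ Set.Icc (0:ℝ) 1 := ⟨le_of_lt hx.1, le_of_lt hx.2⟩
        have hsqIoo := sq_mem_Ioo hx
        have ht0Ioo := t0_mem_Ioo hx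
        have hfm0 : 0 ≤ polarIter ff m x := fm_nonneg m x hxIcc
        have hfmid : polarIter ff m x ≤ x := fm_le_id m x hxIcc
        have hAn0 : 0 ≤ A ^ n := pow_nonneg hA0 _
        have hJrec : polarIter (indab a b) (n+1) x =
            (polarIter (indab a b) n (x^2) + polarIter (indab a b) n (1-(1-x)^2))/2 := rfl
        have hL₀N : L₀ ≤ n := le_trans (le_trans (le_max_left _ _) (le_max_right _ _)) hn
        rcases em (ell a b (x^2) ≤ n) with h₁ | h₁
        · rcases em (ell a b (1-(1-x)^2) ≤ n) with h₀ | h₀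
          · have ih₁ := ih (x^2) hsqIoo h₁
            have ih₀ := ih (1-(1-x)^2) ht0Ioo h₀
            have hAx := hA x hx
            have hfstep : polarIter ff (m+1) x =
                (polarIter ff m (x^2) + polarIter ff m (1-(1-x)^2))/2 := rfl
            rw [hfstep] at hAx
            have e1 : D₀ * A ^ (n+1) * polarIter ff m x
                = D₀ * A ^ n * (A * polarIter ff m x) := by ring
            rw [e1, hJrec]
            have e2 : D₀ * A ^ n * (A * polarIter ff m x) ≤ D₀ * A ^ n *
                ((polarIter ff m (x^2) + polarIter ff m (1-(1-x)^2))/2) :=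
              mul_le_mul_of_nonneg_left hAx (by positivity)
            refine le_trans e2 ?_
            have e3 : D₀ * A ^ n * ((polarIter ff m (x^2) + polarIter ff m (1-(1-x)^2))/2)
                = (D₀ * A ^ n * polarIter ff m (x^2)
                  + D₀ * A ^ n * polarIter ff m (1-(1-x)^2))/2 := by ring
            rw [e3]
            linarith
          · -- drop-high
            have hxc : 1 - Real.sqrt (1-b) < x := by
              by_contra hxc
              push_neg at hxc
              have hsgx : sg b x = 1 - (1-x)^2 := sg_of_le hxc
              rcases Nat.eq_zero_or_pos (ell a b x) with h0 | hge1
              · have hmem := ell_zero_mem ha0 ha1 hb0 hb1 hab x hx h0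
                exact h₀ (le_trans (hL₀t0 x hmem) hL₀N)
              · have := ell_succ ha0 ha1 hb0 hb1 hab x hx hge1
                rw [hsgx] at this
                omega
            have hK₆n : K₆ + K₈ ≤ n := le_trans (le_trans (le_max_right _ _) (le_max_left _ _)) hn
            have hcontra : ¬ (Real.sqrt (1-b) / (1 - Real.sqrt (1-b))
                ≤ 2 ^ (n - K₆) * (1 - (1-(1-x)^2))) := by
              intro hcon
              apply h₀
              have hyp2 : a / (1-a) ≤ 2 ^ K₆ * min (1-(1-x)^2) (b^2) := by
                have h' : min (1 - Real.sqrt (1-b)) (b^2) ≤ min (1-(1-x)^2) (b^2) :=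
                  min_le_min (by nlinarith [hx.2]) le_rfl
                have h'' : (2:ℝ)^K₆ * min (1 - Real.sqrt (1-b)) (b^2)
                    ≤ 2^K₆ * min (1-(1-x)^2) (b^2) :=
                  mul_le_mul_of_nonneg_left h' (by positivity)
                linarith
              have hm := master ha0 ha1 hb0 hb1 hab (1-(1-x)^2) ht0Ioo (n-K₆) K₆ hcon hyp2
              rw [show (n-K₆) + K₆ = n from by omega] at hm
              exact ell_le ha0 ha1 hb0 hb1 hab hm
            push_neg at hcontra
            have hpowmono : (2:ℝ) ^ K₈ ≤ 2 ^ (n - K₆) :=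
              pow_le_pow_right₀ (by norm_num) (by omega)
            have hxsmall : (1-x)^2 < (z2 m)^2 := by
              have h1 := hcontra
              have e : (1 - (1-(1-x)^2)) = (1-x)^2 := by ring
              rw [e] at h1
              have hs1 : (2:ℝ)^K₈ * (1-x)^2 ≤ 2^(n-K₆) * (1-x)^2 :=
                mul_le_mul_of_nonneg_right hpowmono (sq_nonneg _)
              have hs2 : (2:ℝ)^K₈ * (1-x)^2 < 2^K₈ * (z2 m)^2 := by linarith
              exact lt_of_mul_lt_mul_left hs2 (by positivity)
            have hxz₂ : 1 - x < z2 m := by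
              nlinarith [sq_nonneg (1-x), hx.2]
            have hmarg : 2 * (1-polarIter ff m (1/2)) * (1-x) ≤ polarIter ff m (1 - x^2) := by
              have hmm := margin_low m (u := 1-x) (by linarith [hx.2]) hε hε4
                (by nlinarith)
              rw [show 1 - (1-(1-x))^2 = 1 - x^2 from by ring] at hmm
              exact hmm
            rw [fm_symm m (x^2)] at hmarg
            have hfmx : polarIter ff m x ≤ 1 - x := by
              have h := fm_le_id m (1-x) ⟨by linarith [hx.2], by linarith [hx.1]⟩
              rwa [fm_symm m x] at h
            have hmargin : A * polarIter ff m x ≤ (1/2) * polarIter ff m (x^2) := by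
              have s1 : A * polarIter ff m x ≤ (1-polarIter ff m (1/2)) * polarIter ff m x :=
                mul_le_mul_of_nonneg_right hAle hfm0
              have s2 : (1-polarIter ff m (1/2)) * polarIter ff m x
                  ≤ (1-polarIter ff m (1/2)) * (1-x) :=
                mul_le_mul_of_nonneg_left hfmx (by linarith)
              linarith
            have ih₁ := ih (x^2) hsqIoo h₁
            have hJ0 := J_nonneg a b n (1-(1-x)^2)
            rw [hJrec]
            have e1 : D₀ * A ^ (n+1) * polarIter ff m x
                = D₀ * A ^ n * (A * polarIter ff m x) := by ring
            rw [e1]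
            have e2 : D₀ * A ^ n * (A * polarIter ff m x)
                ≤ D₀ * A ^ n * ((1/2) * polarIter ff m (x^2)) :=
              mul_le_mul_of_nonneg_left hmargin (by positivity)
            nlinarith
        · -- drop-low
          have hxc : x ≤ 1 - Real.sqrt (1-b) := by
            by_contra hxc
            push_neg at hxc
            have hsgx : sg b x = x^2 := sg_of_gt hxc
            rcases Nat.eq_zero_or_pos (ell a b x) with h0 | hge1
            · have hmem := ell_zero_mem ha0 ha1 hb0 hb1 hab x hx h0
              exact h₁ (le_trans (hL₀sq x hmem) hL₀N)
            · have := ell_succ ha0 ha1 hb0 hb1 hab x hx hge1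
              rw [hsgx] at this
              omega
          have hK₅n : K₅ + K₇ ≤ n := le_trans (le_trans (le_max_left _ _) (le_max_left _ _)) hn
          have hcontra : ¬ (a/(1-a) ≤ 2 ^ (n - K₅) * min (x^2) (b^2)) := by
            intro hcon
            apply h₁
            have hyp1 : Real.sqrt (1-b) / (1 - Real.sqrt (1-b)) ≤ 2 ^ K₅ * (1 - x^2) := by
              have h' : 1 - (1 - Real.sqrt (1-b)) ≤ 1 - x^2 := by nlinarith [hx.1]
              have h'' : (2:ℝ)^K₅ * (1 - (1 - Real.sqrt (1-b))) ≤ 2^K₅ * (1 - x^2) :=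
                mul_le_mul_of_nonneg_left h' (by positivity)
              linarith
            have hm := master ha0 ha1 hb0 hb1 hab (x^2) hsqIoo K₅ (n-K₅) hyp1 hcon
            rw [show K₅ + (n-K₅) = n from by omega] at hm
            exact ell_le ha0 ha1 hb0 hb1 hab hm
          push_neg at hcontra
          have hpowmono : (2:ℝ) ^ K₇ ≤ 2 ^ (n - K₅) :=
            pow_le_pow_right₀ (by norm_num) (by omega)
          have hminlt : min (x^2) (b^2) < min ((z2 m)^2) (b^2) := by
            have hminpos : (0:ℝ) ≤ min (x^2) (b^2) := le_min (by positivity) (by positivity)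
            have hs1 : (2:ℝ)^K₇ * min (x^2) (b^2) ≤ 2^(n-K₅) * min (x^2) (b^2) :=
              mul_le_mul_of_nonneg_right hpowmono hminpos
            have hs2 : (2:ℝ)^K₇ * min (x^2) (b^2) < 2^K₇ * min ((z2 m)^2) (b^2) := by
              linarith
            exact lt_of_mul_lt_mul_left hs2 (by positivity)
          have hxsmall : x^2 < (z2 m)^2 := by
            rcases le_or_gt (x^2) (b^2) with hcase | hcase
            · rw [min_eq_left hcase] at hminlt
              exact lt_of_lt_of_le hminlt (min_le_left _ _)
            · exfalso
              rw [min_eq_right (le_of_lt hcase)] at hminlt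
              exact absurd (lt_of_lt_of_le hminlt (min_le_right _ _)) (lt_irrefl _)
          have hxz₂ : x < z2 m := by nlinarith [hx.1]
          have hmarg : 2 * (1-polarIter ff m (1/2)) * x ≤ polarIter ff m (1 - (1-x)^2) :=
            margin_low m (u := x) hx.1 hε hε4 (by nlinarith)
          have hmargin : A * polarIter ff m x ≤ (1/2) * polarIter ff m (1-(1-x)^2) := by
            have s1 : A * polarIter ff m x ≤ (1-polarIter ff m (1/2)) * polarIter ff m x :=
              mul_le_mul_of_nonneg_right hAle hfm0
            have s2 : (1-polarIter ff m (1/2)) * polarIter ff m x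
                ≤ (1-polarIter ff m (1/2)) * x :=
              mul_le_mul_of_nonneg_left hfmid (by linarith)
            linarith
          have hellt0 : ell a b (1-(1-x)^2) ≤ n := by
            rcases Nat.eq_zero_or_pos (ell a b x) with h0 | hge1
            · have hmem := ell_zero_mem ha0 ha1 hb0 hb1 hab x hx h0
              exact le_trans (hL₀t0 x hmem) hL₀N
            · have := ell_succ ha0 ha1 hb0 hb1 hab x hx hge1
              rw [sg_of_le hxc] at this
              omega
          have ih₀ := ih (1-(1-x)^2) ht0Ioo hellt0
          have hJ0 := J_nonneg a b n (x^2)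
          rw [hJrec]
          have e1 : D₀ * A ^ (n+1) * polarIter ff m x
              = D₀ * A ^ n * (A * polarIter ff m x) := by ring
          rw [e1]
          have e2 : D₀ * A ^ n * (A * polarIter ff m x)
              ≤ D₀ * A ^ n * ((1/2) * polarIter ff m (1-(1-x)^2)) :=
            mul_le_mul_of_nonneg_left hmargin (by positivity)
          nlinarith
  have hfmz : 0 < polarIter ff m z := fm_pos m z hz
  refine ⟨D₀ * polarIter ff m z, N₀, by positivity, hA1, ?_⟩
  intro n hn
  have hellz : ell a b z ≤ n := le_trans (le_trans (le_max_right _ _) (le_max_right _ _)) hn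
  have hk := key n hn z hz hellz
  calc D₀ * polarIter ff m z * A ^ n = D₀ * A ^ n * polarIter ff m z := by ring
    _ ≤ polarIter (indab a b) n z := hk

-- ### group 5 : upper bound side
noncomputable def gg : ℝ → ℝ := fun x => (x * (1 - x)) ^ ((2:ℝ)/3)

lemma gg_pos {x : ℝ} (hx : x ∈ Set.Ioo (0:ℝ) 1) : 0 < gg x := by
  obtain ⟨h1, h2⟩ := hx
  exact Real.rpow_pos_of_pos (by nlinarith) _

lemma gm_pos : ∀ (n : ℕ) (x : ℝ), x ∈ Set.Ioo (0:ℝ) 1 → 0 < polarIter gg n x := by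
  intro n
  induction n with
  | zero => intro x hx; exact gg_pos hx
  | succ k ih =>
      intro x hx
      rw [polarIter_succ]
      have h1 := ih _ (sq_mem_Ioo hx)
      have h2 := ih _ (t0_mem_Ioo hx)
      linarith

lemma upper_step (m : ℕ) (B : ℝ)
    (hB : ∀ ζ ∈ Set.Ioo (0:ℝ) 1, polarIter gg (m+1) ζ ≤ B * polarIter gg m ζ) :
    ∀ (k : ℕ), ∀ x ∈ Set.Ioo (0:ℝ) 1, polarIter gg (m+k+1) x ≤ B * polarIter gg (m+k) x := by
  intro k
  induction k with
  | zero => intro x hx; simpa using hB x hx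
  | succ j ih =>
      intro x hx
      have h1 := ih _ (sq_mem_Ioo hx)
      have h2 := ih _ (t0_mem_Ioo hx)
      have e1 : polarIter gg (m+(j+1)+1) x =
          (polarIter gg (m+j+1) (x^2) + polarIter gg (m+j+1) (1-(1-x)^2))/2 := by
        rw [show m+(j+1)+1 = (m+j+1)+1 from by omega]; rfl
      have e2 : polarIter gg (m+(j+1)) x =
          (polarIter gg (m+j) (x^2) + polarIter gg (m+j) (1-(1-x)^2))/2 := by
        rw [show m+(j+1) = (m+j)+1 from by omega]; rfl
      rw [e1, e2]
      linarith

lemma upper_decay (m : ℕ) (B : ℝ) (hB0 : 0 ≤ B)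
    (hB : ∀ ζ ∈ Set.Ioo (0:ℝ) 1, polarIter gg (m+1) ζ ≤ B * polarIter gg m ζ) :
    ∀ (k : ℕ), ∀ x ∈ Set.Ioo (0:ℝ) 1, polarIter gg (m+k) x ≤ B ^ k * polarIter gg m x := by
  intro k
  induction k with
  | zero => intro x hx; simp
  | succ j ih =>
      intro x hx
      have h1 := upper_step m B hB j x hx
      have h2 := ih x hx
      calc polarIter gg (m+(j+1)) x = polarIter gg (m+j+1) x := by rw [show m+(j+1) = m+j+1 from by omega]
        _ ≤ B * polarIter gg (m+j) x := h1
        _ ≤ B * (B ^ j * polarIter gg m x) := mul_le_mul_of_nonneg_left h2 hB0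
        _ = B ^ (j+1) * polarIter gg m x := by ring

lemma indab_le_gg {a b : ℝ} (ha0 : 0 < a) (ha1 : a < 1) (hb0 : 0 < b) (hb1 : b < 1)
    (hab : a ≤ b) :
    ∀ y ∈ Set.Ioo (0:ℝ) 1, indab a b y ≤
      gg y / (min (a*(1-a)) (b*(1-b))) ^ ((2:ℝ)/3) := by
  intro y hy
  have hminpos : 0 < min (a*(1-a)) (b*(1-b)) := lt_min (by nlinarith) (by nlinarith)
  have hgabpos : (0:ℝ) < (min (a*(1-a)) (b*(1-b))) ^ ((2:ℝ)/3) :=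
    Real.rpow_pos_of_pos hminpos _
  unfold indab
  split
  · rename_i hmem
    obtain ⟨hy1, hy2⟩ := hmem
    have hfy : min (a*(1-a)) (b*(1-b)) ≤ y * (1-y) := by
      rcases le_or_gt y (1-a) with hcase | hcase
      · calc min (a*(1-a)) (b*(1-b)) ≤ a*(1-a) := min_le_left _ _
          _ ≤ y * (1-y) := by nlinarith
      · calc min (a*(1-a)) (b*(1-b)) ≤ b*(1-b) := min_le_right _ _
          _ ≤ y * (1-y) := by nlinarith
    have : (min (a*(1-a)) (b*(1-b))) ^ ((2:ℝ)/3) ≤ (y*(1-y)) ^ ((2:ℝ)/3) :=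
      Real.rpow_le_rpow (le_of_lt hminpos) hfy (by norm_num)
    rw [le_div_iff₀ hgabpos, one_mul]
    exact this
  · refine div_nonneg (Real.rpow_nonneg ?_ _) (le_of_lt hgabpos)
    obtain ⟨h1, h2⟩ := hy
    nlinarith

lemma J_le_g {a b : ℝ} (ha0 : 0 < a) (ha1 : a < 1) (hb0 : 0 < b) (hb1 : b < 1)
    (hab : a ≤ b) :
    ∀ (n : ℕ), ∀ x ∈ Set.Ioo (0:ℝ) 1, polarIter (indab a b) n x ≤
      polarIter gg n x / (min (a*(1-a)) (b*(1-b))) ^ ((2:ℝ)/3) := by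
  intro n
  induction n with
  | zero => exact indab_le_gg ha0 ha1 hb0 hb1 hab
  | succ k ih =>
      intro x hx
      have h1 := ih _ (sq_mem_Ioo hx)
      have h2 := ih _ (t0_mem_Ioo hx)
      rw [polarIter_succ, polarIter_succ]
      have hminpos : 0 < min (a*(1-a)) (b*(1-b)) := lt_min (by nlinarith) (by nlinarith)
      have hgabpos : (0:ℝ) < (min (a*(1-a)) (b*(1-b))) ^ ((2:ℝ)/3) :=
        Real.rpow_pos_of_pos hminpos _
      have e : (polarIter gg k (x^2) + polarIter gg k (1-(1-x)^2))/2
            / (min (a*(1-a)) (b*(1-b))) ^ ((2:ℝ)/3)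
          = (polarIter gg k (x^2) / (min (a*(1-a)) (b*(1-b))) ^ ((2:ℝ)/3)
            + polarIter gg k (1-(1-x)^2) / (min (a*(1-a)) (b*(1-b))) ^ ((2:ℝ)/3))/2 := by
        field_simp
      rw [e]
      linarith

-- ### group 6 : words and the measure bridge
noncomputable def wv (x : ℝ) : List Bool → ℝ
  | [] => x
  | bb :: l => wv (becT bb x) l

lemma wv_concat (bb : Bool) : ∀ (l : List Bool) (x : ℝ), wv x (l ++ [bb]) = becT bb (wv x l) := by
  intro l
  induction l with
  | nil => intro x; rfl
  | cons hd tl ih => intro x; simp only [List.cons_append, wv]; exact ih (becT hd x)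

lemma becZ_eq (z : ℝ) : ∀ (n : ℕ) (ω : ℕ → Bool),
    becZ z n ω = wv z (List.ofFn fun i : Fin n => ω i) := by
  intro n
  induction n with
  | zero => intro ω; rfl
  | succ k ih =>
      intro ω
      have e1 : becZ z (k+1) ω = becT (ω k) (becZ z k ω) := rfl
      rw [e1, ih ω]
      have e2 : (List.ofFn fun i : Fin (k+1) => ω i) =
          (List.ofFn fun i : Fin k => ω i) ++ [ω k] := by
        rw [List.ofFn_succ' (fun i : Fin (k+1) => ω i)]
        simp [List.concat_eq_append, Fin.coe_castSucc, Fin.val_last]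
      rw [e2, wv_concat]

lemma polar_sum (h : ℝ → ℝ) : ∀ (n : ℕ) (x : ℝ),
    polarIter h n x = (∑ w : Fin n → Bool, h (wv x (List.ofFn w))) / 2 ^ n := by
  intro n
  induction n with
  | zero =>
      intro x
      rw [Fintype.sum_unique]
      simp [polarIter, wv]
  | succ k ih =>
      intro x
      have hsum : (∑ w : Fin (k+1) → Bool, h (wv x (List.ofFn w)))
          = ∑ p : Bool × (Fin k → Bool), h (wv x (List.ofFn ((Fin.consEquiv (fun _ : Fin (k+1) => Bool)) p))) := by
        rw [Equiv.sum_comp ((Fin.consEquiv (fun _ : Fin (k+1) => Bool)))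
          (fun w => h (wv x (List.ofFn w)))]
      have hofn : ∀ (bb : Bool) (w : Fin k → Bool),
          List.ofFn ((Fin.consEquiv (fun _ : Fin (k+1) => Bool)) (bb, w)) = bb :: List.ofFn w := by
        intro bb w
        rw [List.ofFn_succ]
        simp [Fin.consEquiv, Fin.cons_zero, Fin.cons_succ]
      have hwv : ∀ (bb : Bool) (w : Fin k → Bool),
          h (wv x (List.ofFn ((Fin.consEquiv (fun _ : Fin (k+1) => Bool)) (bb, w)))) =
            h (wv (becT bb x) (List.ofFn w)) := by
        intro bb w; rw [hofn]; rfl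
      have ht : becT true x = x ^ 2 := by simp [becT]
      have hf : becT false x = 1 - (1-x)^2 := by simp [becT]; ring
      calc polarIter h (k+1) x
          = ((∑ w : Fin k → Bool, h (wv (x^2) (List.ofFn w)))
            + (∑ w : Fin k → Bool, h (wv (1-(1-x)^2) (List.ofFn w)))) / 2 ^ (k+1) := by
            rw [polarIter_succ, ih, ih, ← add_div, div_div, ← pow_succ]
        _ = (∑ w : Fin (k+1) → Bool, h (wv x (List.ofFn w))) / 2 ^ (k+1) := by
            congr 1
            rw [hsum, Fintype.sum_prod_type, Fintype.sum_bool]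
            simp only [hwv]
            rw [ht, hf]

open Classical in
noncomputable def goodw (a b z : ℝ) (n : ℕ) : Finset (Fin n → Bool) :=
  Finset.univ.filter (fun w => wv z (List.ofFn w) ∈ Set.Icc a b)

lemma J_card (a b z : ℝ) (n : ℕ) :
    polarIter (indab a b) n z = ((goodw a b z n).card : ℝ) / 2 ^ n := by
  classical
  rw [polar_sum]
  congr 1
  unfold goodw indab
  rw [Finset.sum_boole]

lemma measure_eq (μ : Measure (ℕ → Bool)) (hμ : IsBernoulliHalf μ) (a b z : ℝ) (n : ℕ) :
    μ {ω | becZ z n ω ∈ Set.Icc a b} = ((goodw a b z n).card : ENNReal) * (2 : ENNReal)⁻¹ ^ n := by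
  classical
  have hset : {ω | becZ z n ω ∈ Set.Icc a b}
      = ⋃ w ∈ goodw a b z n, {ω : ℕ → Bool | ∀ i : Fin n, ω i = w i} := by
    ext ω
    simp only [Set.mem_setOf_eq, Set.mem_iUnion]
    constructor
    · intro hmem
      refine ⟨fun i => ω i, ?_, fun i => rfl⟩
      unfold goodw
      rw [Finset.mem_filter]
      exact ⟨Finset.mem_univ _, by rwa [← becZ_eq]⟩
    · rintro ⟨w, hw, hωw⟩
      have he : becZ z n ω = wv z (List.ofFn w) := by
        rw [becZ_eq]
        congr 1
        exact congrArg List.ofFn (funext hωw)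
      rw [he]
      unfold goodw at hw
      rw [Finset.mem_filter] at hw
      exact hw.2
  have hdisj : Set.PairwiseDisjoint ↑(goodw a b z n)
      (fun w : Fin n → Bool => {ω : ℕ → Bool | ∀ i : Fin n, ω i = w i}) := by
    intro w _ w' _ hne
    apply Set.disjoint_left.2
    intro ω hω hω'
    apply hne
    funext i
    rw [← hω i, ← hω' i]
  have hmeas : ∀ w ∈ goodw a b z n,
      MeasurableSet {ω : ℕ → Bool | ∀ i : Fin n, ω i = w i} := by
    intro w _
    have : {ω : ℕ → Bool | ∀ i : Fin n, ω i = w i}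
        = ⋂ i : Fin n, (fun ω : ℕ → Bool => ω (i:ℕ)) ⁻¹' {w i} := by
      ext ω
      simp [Set.mem_iInter, Set.mem_preimage]
    rw [this]
    exact MeasurableSet.iInter fun i =>
      (measurable_pi_apply (i:ℕ)) (MeasurableSet.singleton _)
  rw [hset, measure_biUnion_finset hdisj hmeas]
  rw [Finset.sum_congr rfl (fun w _ => hμ n w), Finset.sum_const, nsmul_eq_mul]

lemma toReal_eq (μ : Measure (ℕ → Bool)) (hμ : IsBernoulliHalf μ) (a b z : ℝ) (n : ℕ) :
    (μ {ω | becZ z n ω ∈ Set.Icc a b}).toReal = polarIter (indab a b) n z := by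
  rw [measure_eq μ hμ a b z n, J_card]
  rw [ENNReal.toReal_mul, ENNReal.toReal_pow, ENNReal.toReal_inv]
  simp only [ENNReal.toReal_natCast, ENNReal.toReal_ofNat]
  rw [inv_pow]
  ring


end PfAux

theorem stmt2 (μ : Measure (ℕ → Bool)) [IsProbabilityMeasure μ] (hμ : IsBernoulliHalf μ)
    (m : ℕ) (z : ℝ) (hz : z ∈ Set.Ioo (0:ℝ) 1)
    (a b : ℝ) (ha : a ∈ Set.Ioo (0:ℝ) 1) (hb : b ∈ Set.Ioo (0:ℝ) 1)
    (hab : Real.sqrt a ≤ 1 - Real.sqrt (1 - b))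
    (A B : ℝ) (hA0 : 0 ≤ A) (hB0 : 0 ≤ B)
    (hA : ∀ ζ ∈ Set.Ioo (0:ℝ) 1,
      A * polarIter (fun x => x * (1 - x)) m ζ ≤ polarIter (fun x => x * (1 - x)) (m + 1) ζ)
    (hB : ∀ ζ ∈ Set.Ioo (0:ℝ) 1,
      polarIter (fun x => (x * (1 - x)) ^ ((2:ℝ)/3)) (m + 1) ζ ≤
        B * polarIter (fun x => (x * (1 - x)) ^ ((2:ℝ)/3)) m ζ) :
    ∃ C₁ C₂ D : ℝ, 0 < C₁ ∧ 0 < C₂ ∧ 0 < D ∧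
      ∀ n : ℕ, max m 1 ≤ n →
        D * (n : ℝ) ^ (-C₁) * A ^ n ≤
            (2:ℝ) ^ (-(n:ℝ)) + (μ {ω | becZ z n ω ∈ Set.Icc a b}).toReal ∧
        (μ {ω | becZ z n ω ∈ Set.Icc a b}).toReal ≤ C₂ * B ^ n := by
  classical
  obtain ⟨hz0, hz1⟩ := hz
  obtain ⟨ha0, ha1⟩ := ha
  obtain ⟨hb0, hb1⟩ := hb
  have hA' : ∀ ζ ∈ Set.Ioo (0:ℝ) 1,
      A * polarIter PfAux.ff m ζ ≤ polarIter PfAux.ff (m + 1) ζ := hA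
  have hB' : ∀ ζ ∈ Set.Ioo (0:ℝ) 1,
      polarIter PfAux.gg (m+1) ζ ≤ B * polarIter PfAux.gg m ζ := hB
  obtain ⟨D₀, N₀, hD₀, hA1, hlow⟩ :=
    PfAux.lower_core a b z A m ha0 ha1 hb0 hb1 hab ⟨hz0, hz1⟩ hA0 hA'
  have habb : a ≤ b := le_trans (PfAux.a_le_c ha0 ha1 hab) (PfAux.c_le_b hb0 hb1)
  have hBpos : 0 < B := by
    have h1 := PfAux.gm_pos (m+1) (1/2) (by norm_num)
    have h2 := hB' (1/2) (by norm_num)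
    have h3 := PfAux.gm_pos m (1/2) (by norm_num)
    nlinarith
  have hminpos : 0 < min (a*(1-a)) (b*(1-b)) := lt_min (by nlinarith) (by nlinarith)
  have hgab : (0:ℝ) < (min (a*(1-a)) (b*(1-b))) ^ ((2:ℝ)/3) :=
    Real.rpow_pos_of_pos hminpos _
  have hgmz : 0 < polarIter PfAux.gg m z := PfAux.gm_pos m z ⟨hz0, hz1⟩
  refine ⟨1, polarIter PfAux.gg m z / ((min (a*(1-a)) (b*(1-b))) ^ ((2:ℝ)/3) * B ^ m),
    min D₀ ((2:ℝ) ^ (-(N₀:ℝ))), one_pos, by positivity, ?_, ?_⟩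
  · apply lt_min hD₀
    exact Real.rpow_pos_of_pos two_pos _
  intro n hn
  have hn1 : 1 ≤ n := le_trans (le_max_right m 1) hn
  have hnm : m ≤ n := le_trans (le_max_left m 1) hn
  have htR := PfAux.toReal_eq μ hμ a b z n
  have hn0 : (0:ℝ) < (n:ℝ) := by exact_mod_cast hn1
  have hxp1 : (n:ℝ) ^ (-(1:ℝ)) ≤ 1 :=
    Real.rpow_le_one_of_one_le_of_nonpos (by exact_mod_cast hn1) (by norm_num)
  have hxp0 : 0 < (n:ℝ) ^ (-(1:ℝ)) := Real.rpow_pos_of_pos hn0 _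
  have hAn1 : A ^ n ≤ 1 := pow_le_one₀ hA0 hA1
  have hAn0 : 0 ≤ A ^ n := pow_nonneg hA0 n
  have htR0 : (0:ℝ) ≤ (μ {ω | becZ z n ω ∈ Set.Icc a b}).toReal := ENNReal.toReal_nonneg
  have h2n : (0:ℝ) < (2:ℝ) ^ (-(n:ℝ)) := Real.rpow_pos_of_pos two_pos _
  have hDmin0 : 0 < min D₀ ((2:ℝ) ^ (-(N₀:ℝ))) :=
    lt_min hD₀ (Real.rpow_pos_of_pos two_pos _)
  constructor
  · rcases le_or_gt N₀ n with hcase | hcase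
    · have hl := hlow n hcase
      rw [htR]
      have hstep : min D₀ ((2:ℝ) ^ (-(N₀:ℝ))) * (n:ℝ) ^ (-(1:ℝ)) * A ^ n ≤ D₀ * A ^ n := by
        have hD' : min D₀ ((2:ℝ) ^ (-(N₀:ℝ))) ≤ D₀ := min_le_left _ _
        have h1 : min D₀ ((2:ℝ) ^ (-(N₀:ℝ))) * (n:ℝ) ^ (-(1:ℝ)) ≤ D₀ * 1 :=
          mul_le_mul hD' hxp1 (le_of_lt hxp0) (le_of_lt hD₀)
        nlinarith
      have h2n' : (0:ℝ) ≤ (2:ℝ) ^ (-(n:ℝ)) := le_of_lt h2n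
      have hJ0 : 0 ≤ polarIter (PfAux.indab a b) n z := PfAux.J_nonneg a b n z
      linarith
    · have hD2 : min D₀ ((2:ℝ) ^ (-(N₀:ℝ))) ≤ (2:ℝ) ^ (-(N₀:ℝ)) := min_le_right _ _
      have hmono : (2:ℝ) ^ (-(N₀:ℝ)) ≤ (2:ℝ) ^ (-(n:ℝ)) := by
        apply Real.rpow_le_rpow_of_exponent_le (by norm_num)
        have : (n:ℝ) ≤ (N₀:ℝ) := by exact_mod_cast le_of_lt hcase
        linarith
      have hstep : min D₀ ((2:ℝ) ^ (-(N₀:ℝ))) * (n:ℝ) ^ (-(1:ℝ)) * A ^ n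
          ≤ min D₀ ((2:ℝ) ^ (-(N₀:ℝ))) := by
        have h1 : min D₀ ((2:ℝ) ^ (-(N₀:ℝ))) * (n:ℝ) ^ (-(1:ℝ))
            ≤ min D₀ ((2:ℝ) ^ (-(N₀:ℝ))) * 1 :=
          mul_le_mul_of_nonneg_left hxp1 (le_of_lt hDmin0)
        nlinarith
      linarith
  · rw [htR]
    have hJg := PfAux.J_le_g ha0 ha1 hb0 hb1 habb n z ⟨hz0, hz1⟩
    have hdec := PfAux.upper_decay m B hB0 hB' (n - m) z ⟨hz0, hz1⟩
    rw [show m + (n-m) = n from by omega] at hdec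
    have hdiv : polarIter PfAux.gg n z / (min (a*(1-a)) (b*(1-b))) ^ ((2:ℝ)/3)
        ≤ B ^ (n-m) * polarIter PfAux.gg m z / (min (a*(1-a)) (b*(1-b))) ^ ((2:ℝ)/3) :=
      by gcongr
    have heq : B ^ (n-m) * polarIter PfAux.gg m z / (min (a*(1-a)) (b*(1-b))) ^ ((2:ℝ)/3)
        = polarIter PfAux.gg m z / ((min (a*(1-a)) (b*(1-b))) ^ ((2:ℝ)/3) * B ^ m) * B ^ n := by
      have hBn : B ^ n = B ^ m * B ^ (n-m) := by
        rw [← pow_add]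
        congr 1
        omega
      rw [hBn]
      have hBm : (0:ℝ) < B ^ m := pow_pos hBpos m
      field_simp
    rw [heq] at hdiv
    linarith
end

section
/- Let (Ω, F, P) be a probability space and X : Ω → ℝ a random variable with 0 ≤ X ≤ 1 almost surely. Let γ, θ > 0, n ∈ ℕ, and let α, β ≥ 0 satisfy 2α + β = γ. If E[X(1−X)] ≥ γ·2^{−nθ}, then P(X ≤ α·2^{−nθ}) ≤ E[1−X] − β·2^{−nθ}. -/
open MeasureTheory

theorem stmt6 {Ω : Type*} [MeasurableSpace Ω] (P : Measure Ω) [IsProbabilityMeasure P]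
    (X : Ω → ℝ) (hXmeas : Measurable X) (hX : ∀ᵐ ω ∂P, X ω ∈ Set.Icc (0:ℝ) 1)
    (γ θ : ℝ) (hγ : 0 < γ) (hθ : 0 < θ) (n : ℕ)
    (α β : ℝ) (hα : 0 ≤ α) (hβ : 0 ≤ β) (hsum : 2 * α + β = γ)
    (hE : γ * (2:ℝ) ^ (-(n:ℝ) * θ) ≤ ∫ ω, X ω * (1 - X ω) ∂P) :
    (P {ω | X ω ≤ α * (2:ℝ) ^ (-(n:ℝ) * θ)}).toReal ≤
      (∫ ω, (1 - X ω) ∂P) - β * (2:ℝ) ^ (-(n:ℝ) * θ) := by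
  set ε := (2:ℝ) ^ (-(n:ℝ) * θ) with hεdef
  have hεpos : 0 < ε := by positivity
  set A := {ω | X ω ≤ α * ε} with hAdef
  have hAmeas : MeasurableSet A := measurableSet_le hXmeas measurable_const
  have hint1 : Integrable (fun ω => X ω * (1 - X ω)) P := by
    apply Integrable.mono' (integrable_const (1:ℝ))
      ((hXmeas.mul (measurable_const.sub hXmeas)).aestronglyMeasurable)
    filter_upwards [hX] with ω h
    obtain ⟨h0, h1⟩ := h
    simp only [Pi.mul_apply, Pi.sub_apply]
    rw [Real.norm_eq_abs, abs_mul, abs_of_nonneg h0, abs_of_nonneg (by linarith : (0:ℝ) ≤ 1 - X ω)]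
    nlinarith
  have hint2 : Integrable (fun ω => 1 - X ω) P := by
    apply Integrable.mono' (integrable_const (1:ℝ))
      ((measurable_const.sub hXmeas).aestronglyMeasurable)
    filter_upwards [hX] with ω h
    obtain ⟨h0, h1⟩ := h
    simp only [Pi.sub_apply]
    rw [Real.norm_eq_abs, abs_of_nonneg (by linarith : (0:ℝ) ≤ 1 - X ω)]; linarith
  have hint3 : Integrable (A.indicator (fun _ => (1:ℝ))) P :=
    (integrable_const (1:ℝ)).indicator hAmeas
  have key : ∫ ω, (X ω * (1 - X ω) + (1 - 2*α*ε) * A.indicator (fun _ => (1:ℝ)) ω) ∂P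
      ≤ ∫ ω, (1 - X ω) ∂P := by
    apply integral_mono_ae (hint1.add (hint3.const_mul _)) hint2
    filter_upwards [hX] with ω h
    obtain ⟨h0, h1⟩ := h
    simp only [Pi.add_apply]
    by_cases hω : ω ∈ A
    · have hx : X ω ≤ α * ε := hω
      rw [Set.indicator_of_mem hω, mul_one]
      nlinarith [sq_nonneg (X ω)]
    · simp only [Set.indicator_of_notMem hω, mul_zero, add_zero]
      nlinarith [sq_nonneg (1 - X ω)]
  have hind : ∫ ω, A.indicator (fun _ => (1:ℝ)) ω ∂P = (P A).toReal := by
    rw [integral_indicator hAmeas, setIntegral_const, smul_eq_mul, mul_one]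
    rfl
  rw [integral_add hint1 (hint3.const_mul _), integral_const_mul, hind] at key
  set p := (P A).toReal with hp
  have hp0 : 0 ≤ p := ENNReal.toReal_nonneg
  have hp1 : p ≤ 1 := by
    rw [hp]
    have := prob_le_one (μ := P) (s := A)
    simpa using ENNReal.toReal_mono (by simp) this
  have haε : 0 ≤ α * ε := by positivity
  nlinarith [key, hE]
end

section
/- Let α < 1 be a real constant and set c₃ = 2/((1−α)·ln 2). Then for every x ∈ (0, 3/4]: x·log₂(1/x) ≤ c₃·( x(1−x) )^α. -/
theorem stmt9 (α : ℝ) (hα : α < 1) (x : ℝ) (hx : x ∈ Set.Ioc (0:ℝ) (3/4)) :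
    x * Real.logb 2 (1 / x) ≤ (2 / ((1 - α) * Real.log 2)) * (x * (1 - x)) ^ α := by
  obtain ⟨hx0, hx34⟩ := hx
  have h1x : 0 < 1 - x := by linarith
  have ht : 0 < x * (1 - x) := mul_pos hx0 h1x
  have hlog2 : 0 < Real.log 2 := Real.log_pos (by norm_num)
  have h1α : 0 < 1 - α := by linarith
  set A := Real.log (1 / x) with hA
  set B := Real.log (1 / (1 - x)) with hB
  have hA0 : 0 ≤ A := Real.log_nonneg (by rw [le_div_iff₀ hx0]; linarith)
  have hB0 : 0 ≤ B := Real.log_nonneg (by rw [le_div_iff₀ h1x]; linarith)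
  have hAB : Real.log (1 / (x * (1 - x))) = A + B := by
    rw [hA, hB, one_div, one_div, one_div, mul_inv, Real.log_mul (by positivity) (by positivity)]
  -- key inequality
  have key : (2 * x - 1) * A ≤ 2 * (1 - x) * B := by
    rcases le_or_gt x (1/2) with h | h
    · have : (2 * x - 1) * A ≤ 0 := mul_nonpos_of_nonpos_of_nonneg (by linarith) hA0
      have : 0 ≤ 2 * (1 - x) * B := by positivity
      linarith
    · have hALB : A ≤ B := by
        apply Real.log_le_log (by positivity)
        rw [div_le_div_iff₀ hx0 h1x]; linarith
      exact mul_le_mul (by linarith) hALB hA0 (by linarith)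
  have step2 : x * A ≤ 2 * ((x * (1 - x)) * (A + B)) := by
    nlinarith [mul_nonneg hx0.le (sub_nonneg.mpr key)]
  -- step 3
  have step3 : (x * (1 - x)) * Real.log (1 / (x * (1 - x))) ≤ (x * (1 - x)) ^ α / (1 - α) := by
    have h := Real.log_le_rpow_div (x := 1 / (x * (1 - x))) (by positivity) h1α
    have hrw : (1 / (x * (1 - x))) ^ (1 - α) = (x * (1 - x)) ^ (α - 1) := by
      rw [one_div, Real.inv_rpow ht.le, ← Real.rpow_neg ht.le]
      congr 1; ring
    calc (x * (1 - x)) * Real.log (1 / (x * (1 - x)))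
        ≤ (x * (1 - x)) * ((x * (1 - x)) ^ (α - 1) / (1 - α)) := by
          apply mul_le_mul_of_nonneg_left _ ht.le
          rw [← hrw]; exact h
      _ = (x * (1 - x)) ^ α / (1 - α) := by
          rw [mul_div_assoc', mul_comm, ← Real.rpow_add_one ht.ne']
          ring_nf
  have main : x * A ≤ 2 / (1 - α) * (x * (1 - x)) ^ α := by
    calc x * A ≤ 2 * ((x * (1 - x)) * (A + B)) := step2
      _ = 2 * ((x * (1 - x)) * Real.log (1 / (x * (1 - x)))) := by rw [hAB]
      _ ≤ 2 * ((x * (1 - x)) ^ α / (1 - α)) := by linarith [step3]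
      _ = 2 / (1 - α) * (x * (1 - x)) ^ α := by ring
  rw [Real.logb, ← mul_div_assoc]
  rw [div_le_iff₀ hlog2]
  calc x * A ≤ 2 / (1 - α) * (x * (1 - x)) ^ α := main
    _ = 2 / ((1 - α) * Real.log 2) * (x * (1 - x)) ^ α * Real.log 2 := by
        field_simp
end

section
/- Let z ∈ [0,1] and let (Z_n) be the BEC Bhattacharyya process started at z. Then for μ-almost every ω ∈ Ω, the limit Z_∞(ω) := lim_{n→∞} Z_n(ω) exists and lies in {0,1}; moreover μ{ω : Z_n(ω) → 1} = z and μ{ω : Z_n(ω) → 0} = 1 − z. -/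
open MeasureTheory Filter Topology

namespace BEC

lemma becT_mem {x : ℝ} (hx : x ∈ Set.Icc (0:ℝ) 1) (b : Bool) : becT b x ∈ Set.Icc (0:ℝ) 1 := by
  obtain ⟨h0, h1⟩ := hx
  cases b <;> simp only [becT, if_true, if_false, Bool.false_eq_true] <;>
    constructor <;> nlinarith

lemma becZ_mem {z : ℝ} (hz : z ∈ Set.Icc (0:ℝ) 1) (n : ℕ) (ω : ℕ → Bool) :
    becZ z n ω ∈ Set.Icc (0:ℝ) 1 := by
  induction n with
  | zero => exact hz
  | succ n ih => exact becT_mem ih _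

lemma measurable_becZ (z : ℝ) (n : ℕ) : Measurable (becZ z n) := by
  induction n with
  | zero => exact measurable_const
  | succ n ih =>
    have hc : Measurable fun ω : ℕ → Bool => ω n := measurable_pi_apply n
    have heq : becZ z (n+1) = fun ω =>
        if ω n = true then (becZ z n ω)^2 else 2 * becZ z n ω - (becZ z n ω)^2 := by
      funext ω
      show becT (ω n) (becZ z n ω) = _
      cases ω n <;> simp [becT]
    rw [heq]
    exact Measurable.ite (hc (measurableSet_singleton true)) (ih.pow_const 2)
      ((ih.const_mul 2).sub (ih.pow_const 2))

lemma becZ_eq_of_agree (z : ℝ) (n : ℕ) (ω ω' : ℕ → Bool)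
    (h : ∀ i, i < n → ω i = ω' i) : becZ z n ω = becZ z n ω' := by
  induction n with
  | zero => rfl
  | succ n ih =>
    show becT (ω n) (becZ z n ω) = becT (ω' n) (becZ z n ω')
    rw [h n (Nat.lt_succ_self n), ih (fun i hi => h i (Nat.lt_succ_of_lt hi))]

def ext (n : ℕ) (b : Fin n → Bool) : ℕ → Bool := fun i => if h : i < n then b ⟨i, h⟩ else false

noncomputable def V (z : ℝ) (n : ℕ) (b : Fin n → Bool) : ℝ := becZ z n (ext n b)

lemma V_mem {z : ℝ} (hz : z ∈ Set.Icc (0:ℝ) 1) (n : ℕ) (b : Fin n → Bool) :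
    V z n b ∈ Set.Icc (0:ℝ) 1 := becZ_mem hz n _

def cyl (n : ℕ) (b : Fin n → Bool) : Set (ℕ → Bool) := {ω | ∀ i : Fin n, ω i = b i}

lemma measurableSet_cyl (n : ℕ) (b : Fin n → Bool) : MeasurableSet (cyl n b) := by
  have : cyl n b = ⋂ i : Fin n, (fun ω : ℕ → Bool => ω i) ⁻¹' {b i} := by
    ext ω; simp [cyl, Set.mem_iInter]
  rw [this]
  exact MeasurableSet.iInter fun i => measurable_pi_apply (i : ℕ) (measurableSet_singleton (b i))

lemma becZ_eq_V {z : ℝ} {n : ℕ} {b : Fin n → Bool} {ω : ℕ → Bool} (h : ω ∈ cyl n b) :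
    becZ z n ω = V z n b := by
  apply becZ_eq_of_agree
  intro i hi
  have := h ⟨i, hi⟩
  simp only [ext, dif_pos hi]
  exact this

lemma rep (z : ℝ) (φ : ℝ → ℝ) (n : ℕ) (ω : ℕ → Bool) :
    φ (becZ z n ω) = ∑ b : Fin n → Bool, (cyl n b).indicator (fun _ => φ (V z n b)) ω := by
  classical
  rw [Finset.sum_eq_single (fun i : Fin n => ω i)]
  · have hmem : ω ∈ cyl n (fun i : Fin n => ω i) := fun i => rfl
    rw [Set.indicator_of_mem hmem]
    rw [becZ_eq_V (z := z) hmem]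
  · intro b _ hb
    apply Set.indicator_of_notMem
    intro hbmem
    exact hb (funext fun i => (hbmem i).symm)
  · intro h
    exact absurd (Finset.mem_univ _) h

lemma integrable_comp (μ : Measure (ℕ → Bool)) [IsProbabilityMeasure μ]
    (φ : ℝ → ℝ) (z : ℝ) (n : ℕ) : Integrable (fun ω => φ (becZ z n ω)) μ := by
  have hrep : (fun ω => φ (becZ z n ω)) =
      fun ω => ∑ b : Fin n → Bool, (cyl n b).indicator (fun _ => φ (V z n b)) ω :=
    funext (rep z φ n)
  rw [hrep]
  exact integrable_finset_sum _ fun b _ =>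
    (integrable_const _).indicator (measurableSet_cyl n b)

lemma integral_comp (μ : Measure (ℕ → Bool)) [IsProbabilityMeasure μ] (hμ : IsBernoulliHalf μ)
    (φ : ℝ → ℝ) (z : ℝ) (n : ℕ) :
    ∫ ω, φ (becZ z n ω) ∂μ = (2⁻¹:ℝ)^n * ∑ b : Fin n → Bool, φ (V z n b) := by
  have hrep : (fun ω => φ (becZ z n ω)) =
      fun ω => ∑ b : Fin n → Bool, (cyl n b).indicator (fun _ => φ (V z n b)) ω :=
    funext (rep z φ n)
  rw [hrep, integral_finset_sum _ (fun b _ =>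
    (integrable_const _).indicator (measurableSet_cyl n b)), Finset.mul_sum]
  apply Finset.sum_congr rfl
  intro b _
  rw [integral_indicator_const _ (measurableSet_cyl n b)]
  have hcm : μ (cyl n b) = (2 : ENNReal)⁻¹ ^ n := hμ n b
  rw [measureReal_def, hcm]
  rw [smul_eq_mul]
  congr 1
  simp [ENNReal.toReal_pow]

lemma V_snoc (z : ℝ) (n : ℕ) (b : Fin n → Bool) (c : Bool) :
    V z (n+1) (Fin.snoc b c) = becT c (V z n b) := by
  show becT (ext (n+1) (Fin.snoc b c) n) (becZ z n (ext (n+1) (Fin.snoc b c))) = _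
  have h1 : ext (n+1) (Fin.snoc b c) n = c := by
    simp only [ext, dif_pos (Nat.lt_succ_self n)]
    exact Fin.snoc_last _ _ ▸ rfl
  have h2 : becZ z n (ext (n+1) (Fin.snoc b c)) = becZ z n (ext n b) := by
    apply becZ_eq_of_agree
    intro i hi
    have e1 : ext (n+1) (Fin.snoc b c) i = (Fin.snoc b c : Fin (n+1) → Bool) (Fin.castSucc ⟨i, hi⟩) := by
      simp only [ext, dif_pos (Nat.lt_succ_of_lt hi)]
      rfl
    rw [e1, Fin.snoc_castSucc]
    simp only [ext, dif_pos hi]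
  rw [h1, h2]
  rfl

lemma sum_succ (φ : ℝ → ℝ) (z : ℝ) (n : ℕ) :
    ∑ b : Fin (n+1) → Bool, φ (V z (n+1) b)
      = ∑ b : Fin n → Bool, (φ (becT false (V z n b)) + φ (becT true (V z n b))) := by
  rw [← Equiv.sum_comp (Fin.snocEquiv (fun _ => Bool)) (fun b => φ (V z (n+1) b))]
  rw [Fintype.sum_prod_type]
  rw [Fintype.sum_bool]
  rw [← Finset.sum_add_distrib]
  apply Finset.sum_congr rfl
  intro b _
  have ht : (Fin.snocEquiv (fun _ => Bool)) (true, b) = Fin.snoc b true := rfl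
  have hf : (Fin.snocEquiv (fun _ => Bool)) (false, b) = Fin.snoc b false := rfl
  rw [ht, hf, V_snoc, V_snoc]
  ring

lemma sum_id {z : ℝ} (n : ℕ) : ∑ b : Fin n → Bool, V z n b = 2^n * z := by
  induction n with
  | zero =>
    rw [Finset.sum_eq_single (fun i : Fin 0 => false)]
    · show z = 2 ^ 0 * z
      ring
    · intro b _ hb; exact absurd (funext fun i => i.elim0) hb
    · intro h; exact absurd (Finset.mem_univ _) h
  | succ n ih =>
    rw [sum_succ (fun x => x) z n]
    have : ∀ b : Fin n → Bool, becT false (V z n b) + becT true (V z n b) = 2 * V z n b := by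
      intro b; simp only [becT, if_true, if_false, Bool.false_eq_true]; ring
    rw [Finset.sum_congr rfl (fun b _ => this b), ← Finset.mul_sum, ih]
    ring

lemma sqrt_ineq {v : ℝ} (hv : v ∈ Set.Icc (0:ℝ) 1) :
    Real.sqrt (becT false v * (1 - becT false v)) + Real.sqrt (becT true v * (1 - becT true v))
      ≤ Real.sqrt 3 * Real.sqrt (v * (1 - v)) := by
  obtain ⟨h0, h1⟩ := hv
  have e0 : becT false v * (1 - becT false v) = (v*(1-v)) * ((1-v)*(2-v)) := by
    simp only [becT, if_false, Bool.false_eq_true]; ring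
  have e1 : becT true v * (1 - becT true v) = (v*(1-v)) * (v*(1+v)) := by
    simp only [becT, if_true]; ring
  rw [e0, e1, Real.sqrt_mul (show (0:ℝ) ≤ v*(1-v) by nlinarith) ((1-v)*(2-v)),
    Real.sqrt_mul (show (0:ℝ) ≤ v*(1-v) by nlinarith) (v*(1+v))]
  have key : Real.sqrt ((1-v)*(2-v)) + Real.sqrt (v*(1+v)) ≤ Real.sqrt 3 := by
    have ha : (0:ℝ) ≤ Real.sqrt ((1-v)*(2-v)) := Real.sqrt_nonneg _
    have hb : (0:ℝ) ≤ Real.sqrt (v*(1+v)) := Real.sqrt_nonneg _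
    have ha2 : Real.sqrt ((1-v)*(2-v)) ^ 2 = (1-v)*(2-v) := Real.sq_sqrt (by nlinarith)
    have hb2 : Real.sqrt (v*(1+v)) ^ 2 = v*(1+v) := Real.sq_sqrt (by nlinarith)
    set a := Real.sqrt ((1-v)*(2-v))
    set b := Real.sqrt (v*(1+v))
    have hmul : (a*b)^2 = ((1-v)*(2-v))*(v*(1+v)) := by
      rw [mul_pow, ha2, hb2]
    have hR : (0:ℝ) ≤ 1 + 2*v - 2*v^2 := by nlinarith
    have hab : 2*(a*b) ≤ 1 + 2*v - 2*v^2 := by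
      nlinarith [hmul, hR, mul_nonneg ha hb, sq_nonneg (1 - 2*v)]
    rw [← Real.sqrt_sq (show (0:ℝ) ≤ a + b by positivity)]
    apply Real.sqrt_le_sqrt
    nlinarith [hab, ha2, hb2]
  calc Real.sqrt (v*(1-v)) * Real.sqrt ((1-v)*(2-v)) + Real.sqrt (v*(1-v)) * Real.sqrt (v*(1+v))
      = Real.sqrt (v*(1-v)) * (Real.sqrt ((1-v)*(2-v)) + Real.sqrt (v*(1+v))) := by ring
    _ ≤ Real.sqrt (v*(1-v)) * Real.sqrt 3 :=
        mul_le_mul_of_nonneg_left key (Real.sqrt_nonneg _)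
    _ = Real.sqrt 3 * Real.sqrt (v*(1-v)) := mul_comm _ _

end BEC

namespace BEC

lemma sum_sqrt {z : ℝ} (hz : z ∈ Set.Icc (0:ℝ) 1) (n : ℕ) :
    ∑ b : Fin n → Bool, Real.sqrt (V z n b * (1 - V z n b)) ≤ Real.sqrt 3 ^ n * (1/2) := by
  induction n with
  | zero =>
    rw [Finset.sum_eq_single (fun i : Fin 0 => false)]
    · obtain ⟨h0, h1⟩ := hz
      have : V z 0 (fun i : Fin 0 => false) * (1 - V z 0 (fun i : Fin 0 => false)) = z * (1-z) := rfl
      rw [this]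
      have h14 : z * (1 - z) ≤ (1/2)^2 := by nlinarith [sq_nonneg (z - 1/2)]
      calc Real.sqrt (z * (1-z)) ≤ Real.sqrt ((1/2)^2) := Real.sqrt_le_sqrt h14
        _ = 1/2 := Real.sqrt_sq (by norm_num)
        _ = Real.sqrt 3 ^ 0 * (1/2) := by norm_num
    · intro b _ hb; exact absurd (funext fun i => i.elim0) hb
    · intro h; exact absurd (Finset.mem_univ _) h
  | succ n ih =>
    rw [sum_succ (fun x => Real.sqrt (x * (1 - x))) z n]
    have hle : ∀ b : Fin n → Bool,
        Real.sqrt (becT false (V z n b) * (1 - becT false (V z n b)))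
          + Real.sqrt (becT true (V z n b) * (1 - becT true (V z n b)))
        ≤ Real.sqrt 3 * Real.sqrt (V z n b * (1 - V z n b)) :=
      fun b => sqrt_ineq (V_mem hz n b)
    calc ∑ b : Fin n → Bool, (Real.sqrt (becT false (V z n b) * (1 - becT false (V z n b)))
          + Real.sqrt (becT true (V z n b) * (1 - becT true (V z n b))))
        ≤ ∑ b : Fin n → Bool, Real.sqrt 3 * Real.sqrt (V z n b * (1 - V z n b)) :=
          Finset.sum_le_sum fun b _ => hle b
      _ = Real.sqrt 3 * ∑ b : Fin n → Bool, Real.sqrt (V z n b * (1 - V z n b)) := by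
          rw [Finset.mul_sum]
      _ ≤ Real.sqrt 3 * (Real.sqrt 3 ^ n * (1/2)) :=
          mul_le_mul_of_nonneg_left ih (Real.sqrt_nonneg 3)
      _ = Real.sqrt 3 ^ (n+1) * (1/2) := by ring

lemma integral_becZ (μ : Measure (ℕ → Bool)) [IsProbabilityMeasure μ] (hμ : IsBernoulliHalf μ)
    (z : ℝ) (n : ℕ) : ∫ ω, becZ z n ω ∂μ = z := by
  have h := integral_comp μ hμ (fun x => x) z n
  rw [h, sum_id, ← mul_assoc, ← mul_pow]
  norm_num

lemma integral_sqrt_le (μ : Measure (ℕ → Bool)) [IsProbabilityMeasure μ] (hμ : IsBernoulliHalf μ)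
    {z : ℝ} (hz : z ∈ Set.Icc (0:ℝ) 1) (n : ℕ) :
    ∫ ω, Real.sqrt (becZ z n ω * (1 - becZ z n ω)) ∂μ ≤ (Real.sqrt 3 / 2) ^ n * (1/2) := by
  have h := integral_comp μ hμ (fun x => Real.sqrt (x * (1 - x))) z n
  rw [h]
  have hb := sum_sqrt hz n
  calc (2⁻¹:ℝ)^n * ∑ b : Fin n → Bool, Real.sqrt (V z n b * (1 - V z n b))
      ≤ (2⁻¹:ℝ)^n * (Real.sqrt 3 ^ n * (1/2)) :=
        mul_le_mul_of_nonneg_left hb (by positivity)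
    _ = (Real.sqrt 3 / 2) ^ n * (1/2) := by rw [div_pow, div_eq_mul_inv, inv_pow]; ring

lemma pathwise {z : ℝ} (hz : z ∈ Set.Icc (0:ℝ) 1) {ω : ℕ → Bool}
    (hω : (∑' n, ENNReal.ofReal (Real.sqrt (becZ z n ω * (1 - becZ z n ω)))) ≠ ⊤) :
    ∃ L ∈ ({0, 1} : Set ℝ), Tendsto (fun n => becZ z n ω) atTop (nhds L) := by
  have hsumm : Summable (fun n => Real.sqrt (becZ z n ω * (1 - becZ z n ω))) := by
    have h := ENNReal.summable_toReal hω
    simpa [ENNReal.toReal_ofReal (Real.sqrt_nonneg _)] using h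
  have hcauchy : CauchySeq (fun n => becZ z n ω) := by
    apply cauchySeq_of_summable_dist
    apply Summable.of_nonneg_of_le (fun n => dist_nonneg) _ hsumm
    intro n
    obtain ⟨h0, h1⟩ := becZ_mem hz n ω
    have hd : dist (becZ z n ω) (becZ z (n+1) ω) = becZ z n ω * (1 - becZ z n ω) := by
      show |becZ z n ω - becT (ω n) (becZ z n ω)| = _
      cases ω n
      · simp only [becT, if_false, Bool.false_eq_true]
        rw [show becZ z n ω - (2 * becZ z n ω - becZ z n ω ^ 2)
            = -(becZ z n ω * (1 - becZ z n ω)) by ring, abs_neg, abs_of_nonneg (by nlinarith)]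
      · simp only [becT, if_true]
        rw [show becZ z n ω - becZ z n ω ^ 2 = becZ z n ω * (1 - becZ z n ω) by ring,
          abs_of_nonneg (by nlinarith)]
    rw [hd]
    -- y ≤ √y for y ∈ [0,1]
    set y := becZ z n ω * (1 - becZ z n ω) with hy
    have hy0 : 0 ≤ y := by nlinarith
    have hy1 : y ≤ 1 := by nlinarith
    have hs := Real.sq_sqrt hy0
    have hs1 : Real.sqrt y ≤ 1 := Real.sqrt_le_one.mpr hy1
    nlinarith [Real.sqrt_nonneg y]
  obtain ⟨L, hL⟩ := cauchySeq_tendsto_of_complete hcauchy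
  have hLmem : L ∈ Set.Icc (0:ℝ) 1 :=
    isClosed_Icc.mem_of_tendsto hL (Filter.Eventually.of_forall fun n => becZ_mem hz n ω)
  have htend0 : Tendsto (fun n => Real.sqrt (becZ z n ω * (1 - becZ z n ω))) atTop
      (nhds (Real.sqrt (L * (1 - L)))) := by
    have hcont : Continuous fun x : ℝ => Real.sqrt (x * (1 - x)) := by
      exact Real.continuous_sqrt.comp (continuous_id.mul (continuous_const.sub continuous_id))
    exact (hcont.tendsto L).comp hL
  have hzero : Real.sqrt (L * (1 - L)) = 0 :=
    tendsto_nhds_unique htend0 hsumm.tendsto_atTop_zero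
  have hLL : L * (1 - L) = 0 := by
    have hle : L * (1 - L) ≤ 0 := Real.sqrt_eq_zero'.mp hzero
    obtain ⟨hl0, hl1⟩ := hLmem
    nlinarith
  rcases mul_eq_zero.mp hLL with h | h
  · exact ⟨0, Or.inl rfl, h ▸ hL⟩
  · have : L = 1 := by linarith [sub_eq_zero.mp h]
    exact ⟨1, Or.inr rfl, this ▸ hL⟩

end BEC

theorem stmt19 (μ : Measure (ℕ → Bool)) [IsProbabilityMeasure μ] (hμ : IsBernoulliHalf μ)
    (z : ℝ) (hz : z ∈ Set.Icc (0:ℝ) 1) :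
    (∀ᵐ ω ∂μ, ∃ L ∈ ({0, 1} : Set ℝ),
        Tendsto (fun n => becZ z n ω) atTop (nhds L)) ∧
    μ {ω | Tendsto (fun n => becZ z n ω) atTop (nhds 1)} = ENNReal.ofReal z ∧
    μ {ω | Tendsto (fun n => becZ z n ω) atTop (nhds 0)} = ENNReal.ofReal (1 - z) := by
  classical
  set f : ℕ → (ℕ → Bool) → ℝ := fun n ω => Real.sqrt (becZ z n ω * (1 - becZ z n ω)) with hf
  have hfm : ∀ n, Measurable (f n) := fun n =>
    ((Real.continuous_sqrt.comp
      (continuous_id.mul (continuous_const.sub continuous_id))).measurable).comp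
      (BEC.measurable_becZ z n)
  have hfi : ∀ n, Integrable (f n) μ := fun n =>
    BEC.integrable_comp μ (fun x => Real.sqrt (x * (1 - x))) z n
  have hfnn : ∀ n (ω : ℕ → Bool), 0 ≤ f n ω := fun n ω => Real.sqrt_nonneg _
  have hlintle : ∀ n, ∫⁻ ω, ENNReal.ofReal (f n ω) ∂μ
      ≤ ENNReal.ofReal ((Real.sqrt 3 / 2) ^ n * (1/2)) := by
    intro n
    rw [← ofReal_integral_eq_lintegral_ofReal (hfi n) (Filter.Eventually.of_forall (hfnn n))]
    exact ENNReal.ofReal_le_ofReal (BEC.integral_sqrt_le μ hμ hz n)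
  have hsummb : Summable (fun n : ℕ => (Real.sqrt 3 / 2) ^ n * (1/2)) := by
    apply Summable.mul_right
    apply summable_geometric_of_lt_one (by positivity)
    rw [div_lt_one (by norm_num)]
    calc Real.sqrt 3 < Real.sqrt 4 := Real.sqrt_lt_sqrt (by norm_num) (by norm_num)
      _ = 2 := by
        rw [show (4:ℝ) = 2^2 by norm_num, Real.sqrt_sq (by norm_num)]
  have htsum : ∑' n, ∫⁻ ω, ENNReal.ofReal (f n ω) ∂μ ≠ ⊤ := by
    apply ne_top_of_le_ne_top _ (ENNReal.tsum_le_tsum hlintle)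
    rw [← ENNReal.ofReal_tsum_of_nonneg (fun n => by positivity) hsummb]
    exact ENNReal.ofReal_ne_top
  have hlt : ∫⁻ ω, ∑' n, ENNReal.ofReal (f n ω) ∂μ ≠ ⊤ := by
    rw [lintegral_tsum (fun n => ((hfm n).ennreal_ofReal).aemeasurable)]
    exact htsum
  have hae : ∀ᵐ ω ∂μ, (∑' n, ENNReal.ofReal (f n ω)) ≠ ⊤ := by
    filter_upwards [ae_lt_top (Measurable.ennreal_tsum fun n => (hfm n).ennreal_ofReal) hlt]
      with ω h
    exact h.ne
  have part1 : ∀ᵐ ω ∂μ, ∃ L ∈ ({0,1} : Set ℝ),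
      Tendsto (fun n => becZ z n ω) atTop (nhds L) := by
    filter_upwards [hae] with ω h
    exact BEC.pathwise hz h
  set G1 := {ω : ℕ → Bool | Tendsto (fun n => becZ z n ω) atTop (nhds (1:ℝ))} with hG1
  set G0 := {ω : ℕ → Bool | Tendsto (fun n => becZ z n ω) atTop (nhds (0:ℝ))} with hG0
  have hG1m : MeasurableSet G1 :=
    measurableSet_tendsto (nhds (1:ℝ)) (fun n => BEC.measurable_becZ z n)
  have hG0m : MeasurableSet G0 :=
    measurableSet_tendsto (nhds (0:ℝ)) (fun n => BEC.measurable_becZ z n)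
  have hdisj : Disjoint G0 G1 := by
    rw [Set.disjoint_left]
    intro ω h0 h1
    exact zero_ne_one (tendsto_nhds_unique h0 h1)
  have hcover : ∀ᵐ ω ∂μ, ω ∈ G0 ∪ G1 := by
    filter_upwards [part1] with ω h
    obtain ⟨L, hL, ht⟩ := h
    simp only [Set.mem_insert_iff, Set.mem_singleton_iff] at hL
    rcases hL with h | h
    · exact Or.inl (show Tendsto _ atTop (nhds (0:ℝ)) from h ▸ ht)
    · exact Or.inr (show Tendsto _ atTop (nhds (1:ℝ)) from h ▸ ht)
  have hind : ∀ᵐ ω ∂μ, Tendsto (fun n => becZ z n ω) atTop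
      (nhds (G1.indicator (fun _ => (1:ℝ)) ω)) := by
    filter_upwards [hcover] with ω h
    rcases h with h | h
    · rw [Set.indicator_of_notMem (Set.disjoint_left.mp hdisj h)]
      exact h
    · rw [Set.indicator_of_mem h]
      exact h
  have hDCT : Tendsto (fun n : ℕ => ∫ ω, becZ z n ω ∂μ) atTop
      (nhds (∫ ω, G1.indicator (fun _ => (1:ℝ)) ω ∂μ)) := by
    refine tendsto_integral_of_dominated_convergence (fun _ => (1:ℝ))
      (fun n => (BEC.measurable_becZ z n).aestronglyMeasurable) (integrable_const 1) ?_ hind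
    intro n
    filter_upwards with ω
    obtain ⟨h0, h1⟩ := BEC.becZ_mem hz n ω
    rw [Real.norm_eq_abs, abs_of_nonneg h0]
    exact h1
  have hconst : (fun n : ℕ => ∫ ω, becZ z n ω ∂μ) = fun _ => z :=
    funext fun n => BEC.integral_becZ μ hμ z n
  rw [hconst] at hDCT
  have hintI : ∫ ω, G1.indicator (fun _ => (1:ℝ)) ω ∂μ = (μ G1).toReal := by
    rw [integral_indicator_const _ hG1m]
    simp [measureReal_def]
  have hz' : (μ G1).toReal = z := by
    have h := tendsto_nhds_unique tendsto_const_nhds hDCT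
    rw [hintI] at h
    exact h.symm
  have hμG1 : μ G1 = ENNReal.ofReal z := by
    rw [← hz', ENNReal.ofReal_toReal (measure_ne_top μ G1)]
  have hunion : μ (G0 ∪ G1) = 1 := by
    rw [← prob_compl_eq_zero_iff (hG0m.union hG1m)]
    exact hcover
  have hadd : μ G0 + μ G1 = 1 := by
    rw [← measure_union hdisj hG1m, hunion]
  have hμG0 : μ G0 = ENNReal.ofReal (1 - z) := by
    have hsum : ENNReal.ofReal z + ENNReal.ofReal (1 - z) = 1 := by
      rw [← ENNReal.ofReal_add hz.1 (by linarith [hz.2])]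
      norm_num
    have hkey : ENNReal.ofReal z + μ G0 = ENNReal.ofReal z + ENNReal.ofReal (1 - z) := by
      rw [hsum, ← hμG1, add_comm, hadd]
    exact WithTop.add_left_cancel ENNReal.ofReal_ne_top hkey
  exact ⟨part1, hμG1, hμG0⟩
end
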